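/- arXiv:2410.00908 — 6 statements merged into one kernel-verified Lean document; each statement's English description precedes it below -/
import Mathlib

section
/- For all D ≥ 1 and n_max ≥ 1 there exists N₀ such that for every N ≥ N₀ the following holds: if for each 1 ≤ n ≤ n_max a coefficient function λ_n : (Perm(Fin n))^D → ℂ is given which is invariant under simultaneous conjugation (λ_n(η σ_1 η⁻¹, …, η σ_D η⁻¹) = λ_n(σ_1,…,σ_D) for every η ∈ Perm(Fin n)), and if Σ_{n=1}^{n_max} Σ_{σ ∈ (Perm(Fin n))^D} λ_n(σ) · Tr_σ(A) = 0 for every mixed tensor A of size N with D indices, then λ_n(σ) = 0 for all n ≤ n_max and all σ. (Linear independence of the mixed trace-invariants, one per simultaneous-conjugacy class, for N large enough.) -/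
/-- The trace-invariant of a mixed tensor `A` of size `N` with `D` indices,
associated to a `D`-tuple `σ` of permutations of `Fin n`. -/
noncomputable def trInv {N D n : ℕ} (σ : Fin D → Equiv.Perm (Fin n))
    (A : (Fin D → Fin N) → (Fin D → Fin N) → ℂ) : ℂ :=
  ∑ i : Fin n → Fin D → Fin N,
    ∏ s : Fin n, A (fun c => i s c) (fun c => i ((σ c)⁻¹ s) c)

lemma trInv_smul {N D n : ℕ} (σ : Fin D → Equiv.Perm (Fin n))
    (A : (Fin D → Fin N) → (Fin D → Fin N) → ℂ) (t : ℂ) :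
    trInv σ (t • A) = t ^ n * trInv σ A := by
  unfold trInv
  rw [Finset.mul_sum]
  refine Finset.sum_congr rfl fun i _ => ?_
  simp only [Pi.smul_apply, smul_eq_mul, Finset.prod_mul_distrib, Finset.prod_const,
    Finset.card_univ, Fintype.card_fin]

/-- inclusion–exclusion helper -/
lemma sum_powerset_ind {n : ℕ} (R : Finset (Fin n)) :
    ∑ S ∈ (Finset.univ : Finset (Fin n)).powerset,
      (if R ⊆ S then ((-1 : ℂ)) ^ S.card else 0) =
      if R = Finset.univ then ((-1 : ℂ)) ^ n else 0 := by
  classical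
  have hbij : ∑ S ∈ (Finset.univ : Finset (Fin n)).powerset,
      (if R ⊆ S then ((-1 : ℂ)) ^ S.card else 0) =
      ∑ U ∈ (Finset.univ : Finset (Fin n)).powerset,
      (if R ⊆ Uᶜ then ((-1 : ℂ)) ^ (Uᶜ).card else 0) := by
    refine Finset.sum_nbij' (fun S => Sᶜ) (fun U => Uᶜ) ?_ ?_ ?_ ?_ ?_
    · intro a _; exact Finset.mem_powerset.mpr (Finset.subset_univ _)
    · intro a _; exact Finset.mem_powerset.mpr (Finset.subset_univ _)
    · intro a _; simp
    · intro a _; simp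
    · intro a _; simp
  rw [hbij]
  have h1 : ∀ U : Finset (Fin n), (R ⊆ Uᶜ) ↔ U ⊆ Rᶜ := by
    intro U; exact Finset.subset_compl_comm
  have h2 : ∀ U : Finset (Fin n), U ⊆ Rᶜ → ((-1 : ℂ)) ^ (Uᶜ).card = (-1) ^ n * (-1) ^ U.card := by
    intro U _
    have hu : U.card ≤ n := by
      simpa using Finset.card_le_card (Finset.subset_univ U)
    calc ((-1 : ℂ)) ^ (Uᶜ).card = (-1) ^ (n - U.card) := by
          rw [Finset.card_compl, Fintype.card_fin]
      _ = (-1) ^ (n - U.card) * ((-1) ^ 2) ^ U.card := by norm_num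
      _ = (-1) ^ (n - U.card + 2 * U.card) := by rw [← pow_mul, ← pow_add]
      _ = (-1) ^ (n + U.card) := by congr 1; omega
      _ = (-1) ^ n * (-1) ^ U.card := pow_add _ _ _
  have : ∑ U ∈ (Finset.univ : Finset (Fin n)).powerset,
      (if R ⊆ Uᶜ then ((-1 : ℂ)) ^ (Uᶜ).card else 0) =
      ∑ U ∈ Rᶜ.powerset, ((-1 : ℂ)) ^ n * (-1) ^ U.card := by
    rw [← Finset.sum_filter]
    refine Finset.sum_congr ?_ ?_
    · ext U
      simp [h1 U, Finset.mem_powerset]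
    · intro U hU
      exact h2 U (Finset.mem_powerset.mp hU)
  rw [this, ← Finset.mul_sum]
  have hz : ∑ U ∈ Rᶜ.powerset, ((-1 : ℂ)) ^ U.card =
      if Rᶜ = ∅ then 1 else 0 := by
    have := Finset.sum_powerset_neg_one_pow_card (x := Rᶜ)
    have := congrArg (fun z : ℤ => (z : ℂ)) this
    push_cast at this
    convert this using 2 <;> simp
  rw [hz]
  by_cases h : R = Finset.univ
  · simp [h]
  · have : Rᶜ ≠ ∅ := by
      simpa [Finset.compl_eq_empty_iff] using h
    simp [h, this]

noncomputable def Bt {N D n : ℕ} (τ : Fin D → Equiv.Perm (Fin n)) (emb : Fin n ↪ Fin N)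
    (S : Finset (Fin n)) : (Fin D → Fin N) → (Fin D → Fin N) → ℂ :=
  fun x y => ∑ k ∈ S,
    if (x = fun _ => emb k) ∧ (y = fun c => emb ((τ c)⁻¹ k)) then 1 else 0

lemma trInv_Bt {N D n : ℕ} (τ σ : Fin D → Equiv.Perm (Fin n)) (emb : Fin n ↪ Fin N)
    (S : Finset (Fin n)) :
    trInv σ (Bt τ emb S) =
      ∑ g ∈ Fintype.piFinset (fun _ : Fin n => S),
        if (∀ s c, g ((σ c)⁻¹ s) = (τ c)⁻¹ (g s)) then (1 : ℂ) else 0 := by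
  classical
  unfold trInv Bt
  have hprod : ∀ i : Fin n → Fin D → Fin N,
      (∏ s : Fin n, ∑ k ∈ S,
        if ((fun c => i s c) = fun _ => emb k) ∧
           ((fun c => i ((σ c)⁻¹ s) c) = fun c => emb ((τ c)⁻¹ k)) then (1:ℂ) else 0)
      = ∑ g ∈ Fintype.piFinset (fun _ : Fin n => S),
          if ∀ s : Fin n, ((fun c => i s c) = fun _ => emb (g s)) ∧
              ((fun c => i ((σ c)⁻¹ s) c) = fun c => emb ((τ c)⁻¹ (g s))) then (1:ℂ) else 0 := by
    intro i
    rw [Finset.prod_univ_sum]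
    refine Finset.sum_congr rfl fun g _ => ?_
    rw [Finset.prod_boole]
    simp
  calc (∑ i : Fin n → Fin D → Fin N, ∏ s : Fin n, Bt τ emb S (fun c => i s c)
          (fun c => i ((σ c)⁻¹ s) c))
      = ∑ i : Fin n → Fin D → Fin N, ∑ g ∈ Fintype.piFinset (fun _ : Fin n => S),
          if ∀ s : Fin n, ((fun c => i s c) = fun _ => emb (g s)) ∧
              ((fun c => i ((σ c)⁻¹ s) c) = fun c => emb ((τ c)⁻¹ (g s))) then (1:ℂ) else 0 := by
        refine Finset.sum_congr rfl fun i _ => ?_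
        rw [← hprod i]; rfl
    _ = ∑ g ∈ Fintype.piFinset (fun _ : Fin n => S), ∑ i : Fin n → Fin D → Fin N,
          if ∀ s : Fin n, ((fun c => i s c) = fun _ => emb (g s)) ∧
              ((fun c => i ((σ c)⁻¹ s) c) = fun c => emb ((τ c)⁻¹ (g s))) then (1:ℂ) else 0 :=
        Finset.sum_comm
    _ = ∑ g ∈ Fintype.piFinset (fun _ : Fin n => S),
        if (∀ s c, g ((σ c)⁻¹ s) = (τ c)⁻¹ (g s)) then (1 : ℂ) else 0 := by
        refine Finset.sum_congr rfl fun g _ => ?_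
        have hiff : ∀ i : Fin n → Fin D → Fin N,
            (∀ s : Fin n, ((fun c => i s c) = fun _ => emb (g s)) ∧
              ((fun c => i ((σ c)⁻¹ s) c) = fun c => emb ((τ c)⁻¹ (g s))))
            ↔ (i = fun s _ => emb (g s)) ∧ (∀ s c, g ((σ c)⁻¹ s) = (τ c)⁻¹ (g s)) := by
          intro i
          constructor
          · intro h
            have hi : i = fun s _ => emb (g s) := by
              funext s c
              exact congrFun (h s).1 c
            refine ⟨hi, fun s c => ?_⟩
            have h2 := congrFun (h s).2 c
            have h1 := congrFun (h ((σ c)⁻¹ s)).1 c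
            apply emb.injective
            rw [← h1, h2]
          · rintro ⟨hi, hC⟩ s
            subst hi
            constructor
            · rfl
            · funext c
              exact congrArg emb (hC s c)
        calc (∑ i : Fin n → Fin D → Fin N,
              if ∀ s : Fin n, ((fun c => i s c) = fun _ => emb (g s)) ∧
                ((fun c => i ((σ c)⁻¹ s) c) = fun c => emb ((τ c)⁻¹ (g s))) then (1:ℂ) else 0)
            = ∑ i : Fin n → Fin D → Fin N,
              if i = (fun s _ => emb (g s)) then
                (if (∀ s c, g ((σ c)⁻¹ s) = (τ c)⁻¹ (g s)) then (1:ℂ) else 0) else 0 := by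
              refine Finset.sum_congr rfl fun i _ => ?_
              rw [if_congr (hiff i) rfl rfl, ite_and]
          _ = if (∀ s c, g ((σ c)⁻¹ s) = (τ c)⁻¹ (g s)) then (1 : ℂ) else 0 := by
              rw [Finset.sum_ite_eq' Finset.univ (fun s _ => emb (g s))
                (fun _ => if (∀ s c, g ((σ c)⁻¹ s) = (τ c)⁻¹ (g s)) then (1:ℂ) else 0)]
              simp

lemma surj_sum {n : ℕ} (f : (Fin n → Fin n) → ℂ) :
    ∑ g : Fin n → Fin n,
      (if Finset.image g Finset.univ = Finset.univ then f g else 0)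
    = ∑ π : Equiv.Perm (Fin n), f ⇑π := by
  classical
  rw [← Finset.sum_filter]
  have him : (Finset.univ.filter
      (fun g : Fin n → Fin n => Finset.image g Finset.univ = Finset.univ))
      = Finset.image (fun π : Equiv.Perm (Fin n) => ⇑π) Finset.univ := by
    ext g
    simp only [Finset.mem_filter, Finset.mem_image, Finset.mem_univ, true_and]
    constructor
    · intro h
      have hsurj : Function.Surjective g := by
        intro y
        have : y ∈ Finset.image g Finset.univ := by rw [h]; exact Finset.mem_univ y
        obtain ⟨x, _, hx⟩ := Finset.mem_image.mp this
        exact ⟨x, hx⟩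
      exact ⟨Equiv.ofBijective g hsurj.bijective_of_finite, rfl⟩
    · rintro ⟨π, rfl⟩
      ext y
      simp only [Finset.mem_image, Finset.mem_univ, true_and, iff_true]
      exact π.surjective y
  rw [him, Finset.sum_image (fun π _ π' _ h => Equiv.coe_fn_injective h)]

lemma cond_iff {D n : ℕ} (σ τ : Fin D → Equiv.Perm (Fin n)) (π : Equiv.Perm (Fin n)) :
    (∀ s c, π ((σ c)⁻¹ s) = (τ c)⁻¹ (π s)) ↔ (σ = fun c => π⁻¹ * τ c * π) := by
  constructor
  · intro h
    funext c
    apply Equiv.ext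
    intro x
    have h1 := h (σ c x) c
    rw [Equiv.Perm.inv_def (σ c), Equiv.symm_apply_apply] at h1
    have h2 : (τ c) (π x) = π ((σ c) x) := by
      rw [h1, Equiv.Perm.inv_def (τ c), Equiv.apply_symm_apply]
    show (σ c) x = (π⁻¹ * τ c * π) x
    simp only [Equiv.Perm.mul_apply]
    rw [h2, Equiv.Perm.inv_def π, Equiv.symm_apply_apply]
  · intro h s c
    subst h
    simp [Equiv.Perm.mul_apply, mul_inv_rev]

lemma alt_sum {N D n : ℕ} (τ σ : Fin D → Equiv.Perm (Fin n)) (emb : Fin n ↪ Fin N) :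
    ∑ S ∈ (Finset.univ : Finset (Fin n)).powerset,
      ((-1 : ℂ)) ^ S.card * trInv σ (Bt τ emb S)
    = ((-1 : ℂ)) ^ n * ∑ π : Equiv.Perm (Fin n),
        (if σ = (fun c => π⁻¹ * τ c * π) then (1 : ℂ) else 0) := by
  classical
  set C : (Fin n → Fin n) → Prop := fun g => ∀ s c, g ((σ c)⁻¹ s) = (τ c)⁻¹ (g s) with hC
  have hpi : ∀ S : Finset (Fin n), Fintype.piFinset (fun _ : Fin n => S)
      = Finset.univ.filter (fun g : Fin n → Fin n => ∀ s, g s ∈ S) := by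
    intro S; ext g; simp [Fintype.mem_piFinset]
  calc ∑ S ∈ (Finset.univ : Finset (Fin n)).powerset,
        ((-1 : ℂ)) ^ S.card * trInv σ (Bt τ emb S)
      = ∑ S ∈ (Finset.univ : Finset (Fin n)).powerset, ∑ g : Fin n → Fin n,
          (if ∀ s, g s ∈ S then ((-1 : ℂ)) ^ S.card * (if C g then (1:ℂ) else 0) else 0) := by
        refine Finset.sum_congr rfl fun S _ => ?_
        rw [trInv_Bt, hpi S, Finset.sum_filter, Finset.mul_sum]
        refine Finset.sum_congr rfl fun g _ => ?_
        by_cases h : ∀ s, g s ∈ S <;> simp [h, hC]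
    _ = ∑ g : Fin n → Fin n, ∑ S ∈ (Finset.univ : Finset (Fin n)).powerset,
          (if ∀ s, g s ∈ S then ((-1 : ℂ)) ^ S.card * (if C g then (1:ℂ) else 0) else 0) := by
        exact Finset.sum_comm
    _ = ∑ g : Fin n → Fin n,
          (if C g then (∑ S ∈ (Finset.univ : Finset (Fin n)).powerset,
            (if Finset.image g Finset.univ ⊆ S then ((-1 : ℂ)) ^ S.card else 0)) else 0) := by
        refine Finset.sum_congr rfl fun g _ => ?_
        by_cases hc : C g
        · conv_rhs => rw [if_pos hc]
          refine Finset.sum_congr rfl fun S _ => ?_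
          have : (∀ s, g s ∈ S) ↔ Finset.image g Finset.univ ⊆ S := by
            rw [Finset.image_subset_iff]; simp
          rw [if_congr this rfl rfl]
          by_cases h : Finset.image g Finset.univ ⊆ S
          · rw [if_pos h, if_pos h, if_pos hc, mul_one]
          · rw [if_neg h, if_neg h]
        · simp [hc]
    _ = ∑ g : Fin n → Fin n,
          (if Finset.image g Finset.univ = Finset.univ then
            (if C g then ((-1 : ℂ)) ^ n else 0) else 0) := by
        refine Finset.sum_congr rfl fun g _ => ?_
        rw [sum_powerset_ind (Finset.image g Finset.univ)]
        by_cases hc : C g <;> by_cases h : Finset.image g Finset.univ = Finset.univ <;>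
          simp [hc, h]
    _ = ∑ π : Equiv.Perm (Fin n), (if C ⇑π then ((-1 : ℂ)) ^ n else 0) :=
        surj_sum (fun g => if C g then ((-1 : ℂ)) ^ n else 0)
    _ = ((-1 : ℂ)) ^ n * ∑ π : Equiv.Perm (Fin n),
          (if σ = (fun c => π⁻¹ * τ c * π) then (1 : ℂ) else 0) := by
        rw [Finset.mul_sum]
        refine Finset.sum_congr rfl fun π _ => ?_
        rw [if_congr (cond_iff σ τ π) rfl rfl]
        by_cases h : σ = (fun c => π⁻¹ * τ c * π) <;> simp [h]

/-- Linear independence of the mixed trace-invariants (one per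
simultaneous-conjugacy class) for `N` large enough. -/
theorem mixed_trace_invariants_linearly_independent
    (D nmax : ℕ) (hD : 1 ≤ D) (hmax : 1 ≤ nmax) :
    ∃ N₀ : ℕ, ∀ N : ℕ, N₀ ≤ N →
      ∀ lam : (n : ℕ) → (Fin D → Equiv.Perm (Fin n)) → ℂ,
        (∀ n, 1 ≤ n → n ≤ nmax →
          ∀ (σ : Fin D → Equiv.Perm (Fin n)) (η : Equiv.Perm (Fin n)),
            lam n (fun c => η * σ c * η⁻¹) = lam n σ) →
        (∀ A : (Fin D → Fin N) → (Fin D → Fin N) → ℂ,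
          ∑ n ∈ Finset.Icc 1 nmax,
            ∑ σ : Fin D → Equiv.Perm (Fin n), lam n σ * trInv σ A = 0) →
        ∀ n, 1 ≤ n → n ≤ nmax →
          ∀ σ : Fin D → Equiv.Perm (Fin n), lam n σ = 0 := by
  classical
  refine ⟨nmax, fun N hN lam hinv hzero n hn1 hn2 τ => ?_⟩
  -- Step 1: separate the homogeneous degrees
  have hstep1 : ∀ A : (Fin D → Fin N) → (Fin D → Fin N) → ℂ,
      ∑ σ : Fin D → Equiv.Perm (Fin n), lam n σ * trInv σ A = 0 := by
    intro A
    set c : ℕ → ℂ := fun m => ∑ σ : Fin D → Equiv.Perm (Fin m), lam m σ * trInv σ A with hc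
    have heval : ∀ t : ℂ, ∑ m ∈ Finset.Icc 1 nmax, c m * t ^ m = 0 := by
      intro t
      rw [← hzero (t • A)]
      refine Finset.sum_congr rfl fun m _ => ?_
      rw [hc, Finset.sum_mul]
      refine Finset.sum_congr rfl fun σ _ => ?_
      rw [trInv_smul]
      ring
    have hpoly : (∑ m ∈ Finset.Icc 1 nmax,
        Polynomial.C (c m) * Polynomial.X ^ m) = (0 : Polynomial ℂ) := by
      apply Polynomial.funext
      intro t
      rw [Polynomial.eval_finset_sum]
      simpa using heval t
    have hcoeff := congrArg (fun p : Polynomial ℂ => p.coeff n) hpoly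
    simp only [Polynomial.finset_sum_coeff, Polynomial.coeff_C_mul, Polynomial.coeff_X_pow,
      Polynomial.coeff_zero, mul_ite, mul_one, mul_zero] at hcoeff
    rw [Finset.sum_ite_eq (Finset.Icc 1 nmax) n c,
      if_pos (Finset.mem_Icc.mpr ⟨hn1, hn2⟩)] at hcoeff
    exact hcoeff
  -- Step 2: extract the coefficient via inclusion-exclusion
  have hnN : n ≤ N := hn2.trans hN
  set emb : Fin n ↪ Fin N := ⟨Fin.castLE hnN, Fin.castLE_injective hnN⟩ with hemb
  have hzero2 : ∑ S ∈ (Finset.univ : Finset (Fin n)).powerset,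
      ((-1 : ℂ)) ^ S.card * ∑ σ : Fin D → Equiv.Perm (Fin n),
        lam n σ * trInv σ (Bt τ emb S) = 0 := by
    refine Finset.sum_eq_zero fun S _ => ?_
    rw [hstep1 (Bt τ emb S), mul_zero]
  have hmain : (0 : ℂ) = ((-1 : ℂ)) ^ n * ((n.factorial : ℂ) * lam n τ) := by
    calc (0 : ℂ)
        = ∑ S ∈ (Finset.univ : Finset (Fin n)).powerset,
            ((-1 : ℂ)) ^ S.card * ∑ σ : Fin D → Equiv.Perm (Fin n),
              lam n σ * trInv σ (Bt τ emb S) := hzero2.symm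
      _ = ∑ S ∈ (Finset.univ : Finset (Fin n)).powerset,
            ∑ σ : Fin D → Equiv.Perm (Fin n),
              lam n σ * (((-1 : ℂ)) ^ S.card * trInv σ (Bt τ emb S)) := by
          refine Finset.sum_congr rfl fun S _ => ?_
          rw [Finset.mul_sum]
          refine Finset.sum_congr rfl fun σ _ => ?_
          ring
      _ = ∑ σ : Fin D → Equiv.Perm (Fin n),
            ∑ S ∈ (Finset.univ : Finset (Fin n)).powerset,
              lam n σ * (((-1 : ℂ)) ^ S.card * trInv σ (Bt τ emb S)) := Finset.sum_comm
      _ = ∑ σ : Fin D → Equiv.Perm (Fin n),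
            lam n σ * (((-1 : ℂ)) ^ n * ∑ π : Equiv.Perm (Fin n),
              (if σ = (fun c => π⁻¹ * τ c * π) then (1 : ℂ) else 0)) := by
          refine Finset.sum_congr rfl fun σ _ => ?_
          rw [← Finset.mul_sum, alt_sum τ σ emb]
      _ = ∑ σ : Fin D → Equiv.Perm (Fin n), ∑ π : Equiv.Perm (Fin n),
            ((-1 : ℂ)) ^ n * (if σ = (fun c => π⁻¹ * τ c * π) then lam n σ else 0) := by
          refine Finset.sum_congr rfl fun σ _ => ?_
          rw [Finset.mul_sum, Finset.mul_sum]
          refine Finset.sum_congr rfl fun π _ => ?_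
          by_cases h : σ = (fun c => π⁻¹ * τ c * π) <;> simp [h] <;> ring
      _ = ∑ π : Equiv.Perm (Fin n), ∑ σ : Fin D → Equiv.Perm (Fin n),
            ((-1 : ℂ)) ^ n * (if σ = (fun c => π⁻¹ * τ c * π) then lam n σ else 0) :=
          Finset.sum_comm
      _ = ((-1 : ℂ)) ^ n * ∑ π : Equiv.Perm (Fin n),
            ∑ σ : Fin D → Equiv.Perm (Fin n),
              (if σ = (fun c => π⁻¹ * τ c * π) then lam n σ else 0) := by
          rw [Finset.mul_sum]
          exact Finset.sum_congr rfl fun π _ => (Finset.mul_sum _ _ _).symm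
      _ = ((-1 : ℂ)) ^ n * ∑ π : Equiv.Perm (Fin n),
            lam n (fun c => π⁻¹ * τ c * π) := by
          congr 1
          refine Finset.sum_congr rfl fun π _ => ?_
          rw [Finset.sum_ite_eq' Finset.univ (fun c => π⁻¹ * τ c * π) (lam n),
            if_pos (Finset.mem_univ _)]
      _ = ((-1 : ℂ)) ^ n * ∑ _π : Equiv.Perm (Fin n), lam n τ := by
          congr 1
          refine Finset.sum_congr rfl fun π _ => ?_
          have := hinv n hn1 hn2 τ π⁻¹
          simpa using this
      _ = ((-1 : ℂ)) ^ n * ((n.factorial : ℂ) * lam n τ) := by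
          rw [Finset.sum_const, Finset.card_univ, Fintype.card_perm, Fintype.card_fin,
            nsmul_eq_mul]
  have h1 : ((-1 : ℂ)) ^ n ≠ 0 := pow_ne_zero n (by norm_num)
  have h2 : (n.factorial : ℂ) ≠ 0 := Nat.cast_ne_zero.mpr n.factorial_ne_zero
  have := hmain.symm
  rcases mul_eq_zero.mp this with h | h
  · exact absurd h h1
  rcases mul_eq_zero.mp h with h' | h'
  · exact absurd h' h2
  · exact h'
end

section
/- For all D ≥ 1 and n_max ≥ 1 there exists N₀ such that for every N ≥ N₀ the following holds: if for each 1 ≤ n ≤ n_max a coefficient function λ_n : (Perm(Fin n))^D → ℂ is given which satisfies λ_n(η σ_1 ν, …, η σ_D ν) = λ_n(σ_1,…,σ_D) for all η, ν ∈ Perm(Fin n), and if Σ_{n=1}^{n_max} Σ_{σ ∈ (Perm(Fin n))^D} λ_n(σ) · Tr_σ(T,S) = 0 for every pair of pure tensors T, S of size N with D indices, then λ_n(σ) = 0 for all n ≤ n_max and all σ. (Linear independence of the pure trace-invariants, one per left-right equivalence class, for N large enough.) -/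
/-- The trace-invariant of a pair of pure tensors `T`, `S` of size `N` with `D`
indices, associated to a `D`-tuple `σ` of permutations of `Fin n`. -/
noncomputable def trInvPure {N D n : ℕ} (σ : Fin D → Equiv.Perm (Fin n))
    (T S : (Fin D → Fin N) → ℂ) : ℂ :=
  ∑ i : Fin n → Fin D → Fin N,
    (∏ s : Fin n, T fun c => i s c) * ∏ s : Fin n, S fun c => i ((σ c)⁻¹ s) c

lemma trInvPure_smul {N D n : ℕ} (t : ℂ) (σ : Fin D → Equiv.Perm (Fin n))
    (T S : (Fin D → Fin N) → ℂ) :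
    trInvPure σ (fun j => t * T j) S = t ^ n * trInvPure σ T S := by
  unfold trInvPure
  rw [Finset.mul_sum]
  refine Finset.sum_congr rfl fun i _ => ?_
  rw [Finset.prod_mul_distrib, Finset.prod_const, Finset.card_univ, Fintype.card_fin]
  ring

lemma sep {N D nmax : ℕ} (lam : (n : ℕ) → (Fin D → Equiv.Perm (Fin n)) → ℂ)
    (H : ∀ T S : (Fin D → Fin N) → ℂ,
      ∑ n ∈ Finset.Icc 1 nmax,
        ∑ σ : Fin D → Equiv.Perm (Fin n), lam n σ * trInvPure σ T S = 0)
    (T S : (Fin D → Fin N) → ℂ) (n : ℕ) (hn : n ∈ Finset.Icc 1 nmax) :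
    ∑ σ : Fin D → Equiv.Perm (Fin n), lam n σ * trInvPure σ T S = 0 := by
  set p : Polynomial ℂ := ∑ m ∈ Finset.Icc 1 nmax,
    Polynomial.C (∑ σ : Fin D → Equiv.Perm (Fin m), lam m σ * trInvPure σ T S) *
      Polynomial.X ^ m with hp
  have hev : ∀ t : ℂ, p.eval t = 0 := by
    intro t
    rw [hp, Polynomial.eval_finset_sum]
    have := H (fun j => t * T j) S
    rw [← this]
    refine Finset.sum_congr rfl fun m _ => ?_
    simp only [Polynomial.eval_mul, Polynomial.eval_C, Polynomial.eval_pow, Polynomial.eval_X]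
    rw [Finset.sum_mul]
    refine Finset.sum_congr rfl fun σ _ => ?_
    rw [trInvPure_smul]
    ring
  have hp0 : p = 0 := Polynomial.funext (fun t => by rw [hev t, Polynomial.eval_zero])
  have := congrArg (fun q => Polynomial.coeff q n) hp0
  simp only [hp, Polynomial.finset_sum_coeff, Polynomial.coeff_C_mul, Polynomial.coeff_X_pow,
    Polynomial.coeff_zero, mul_ite, mul_one, mul_zero] at this
  rwa [Finset.sum_ite_eq (Finset.Icc 1 nmax) n, if_pos hn] at this

/-- delta tensor supported on points `w s`, `s ∈ A`. -/
noncomputable def Tdel {N D n : ℕ} (w : Fin n → Fin D → Fin N) (A : Finset (Fin n)) :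
    (Fin D → Fin N) → ℂ :=
  fun j => if ∃ s ∈ A, ∀ c, j c = w s c then 1 else 0

lemma trInv_delta {N D n : ℕ} (hD : 1 ≤ D) (hn : n ≤ N)
    (σ τ : Fin D → Equiv.Perm (Fin n)) (A B : Finset (Fin n)) :
    trInvPure σ (Tdel (fun s _ => Fin.castLE hn s) A)
        (Tdel (fun s c => Fin.castLE hn (τ c s)) B)
      = ∑ gh : (Fin n → Fin n) × (Fin n → Fin n),
          (if (∀ s, gh.1 s ∈ A) ∧ (∀ s, gh.2 s ∈ B) ∧
              (∀ (c : Fin D) (s : Fin n), gh.1 ((σ c)⁻¹ s) = τ c (gh.2 s))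
           then 1 else 0) := by
  classical
  have he : Function.Injective (Fin.castLE hn) := Fin.castLE_injective hn
  unfold trInvPure Tdel
  have lhs_eq : ∀ i : Fin n → Fin D → Fin N,
      ((∏ s : Fin n, if ∃ a ∈ A, ∀ c, i s c = Fin.castLE hn a then (1:ℂ) else 0) *
        ∏ s : Fin n, if ∃ b ∈ B, ∀ c, i ((σ c)⁻¹ s) c = Fin.castLE hn (τ c b) then (1:ℂ) else 0)
      = if ((∀ s, ∃ a ∈ A, ∀ c, i s c = Fin.castLE hn a) ∧
            (∀ s, ∃ b ∈ B, ∀ c, i ((σ c)⁻¹ s) c = Fin.castLE hn (τ c b))) then 1 else 0 := by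
    intro i
    rw [Fintype.prod_boole, Fintype.prod_boole]
    by_cases h1 : (∀ s, ∃ a ∈ A, ∀ c, i s c = Fin.castLE hn a) <;>
      by_cases h2 : (∀ s : Fin n, ∃ b ∈ B, ∀ c, i ((σ c)⁻¹ s) c = Fin.castLE hn (τ c b)) <;>
      simp [h1, h2]
  simp only [lhs_eq]
  rw [Finset.sum_boole, Finset.sum_boole]
  congr 1
  refine (Finset.card_bij (fun gh _ => fun s _ => Fin.castLE hn (gh.1 s)) ?_ ?_ ?_).symm
  · rintro ⟨g, h⟩ hmem
    simp only [Finset.mem_filter, Finset.mem_univ, true_and] at hmem ⊢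
    obtain ⟨hA, hB, hc⟩ := hmem
    constructor
    · exact fun s => ⟨g s, hA s, fun _ => rfl⟩
    · exact fun s => ⟨h s, hB s, fun c => by rw [hc c s]⟩
  · rintro ⟨g, h⟩ hgh ⟨g', h'⟩ hgh' heq
    simp only [Finset.mem_filter, Finset.mem_univ, true_and] at hgh hgh'
    have hg : g = g' := by
      funext s
      exact he (congrFun (congrFun heq s) ⟨0, hD⟩)
    have hh : h = h' := by
      funext s
      have e1 := hgh.2.2 ⟨0, hD⟩ s
      have e2 := hgh'.2.2 ⟨0, hD⟩ s
      rw [hg] at e1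
      exact (τ ⟨0, hD⟩).injective (e1 ▸ e2 ▸ rfl)
    rw [Prod.mk.injEq]
    exact ⟨hg, hh⟩
  · intro i hi
    simp only [Finset.mem_filter, Finset.mem_univ, true_and] at hi
    obtain ⟨h1, h2⟩ := hi
    choose g hgA hg using h1
    choose h hhB hh using h2
    refine ⟨⟨g, h⟩, ?_, ?_⟩
    · simp only [Finset.mem_filter, Finset.mem_univ, true_and]
      refine ⟨hgA, hhB, fun c s => ?_⟩
      apply he
      rw [← hg ((σ c)⁻¹ s) c, ← hh s c]
    · funext s c
      exact (hg s c).symm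

lemma IE {n : ℕ} (g : Fin n → Fin n) :
    ∑ A : Finset (Fin n), (-1 : ℂ) ^ (Aᶜ.card) * (if ∀ s, g s ∈ A then 1 else 0)
      = if Function.Surjective g then 1 else 0 := by
  classical
  set R : Finset (Fin n) := Finset.image g Finset.univ with hR
  have key : ∀ A : Finset (Fin n), (∀ s, g s ∈ A) ↔ R ⊆ A := by
    intro A
    constructor
    · intro h x hx
      rw [hR, Finset.mem_image] at hx
      obtain ⟨s, -, rfl⟩ := hx
      exact h s
    · intro h s
      exact h (Finset.mem_image_of_mem g (Finset.mem_univ s))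
  simp only [key]
  have inv : Function.Involutive (fun A : Finset (Fin n) => Aᶜ) := fun A => compl_compl A
  let φ : Equiv.Perm (Finset (Fin n)) := inv.toPerm
  have hφ : ∀ A, φ A = Aᶜ := fun _ => rfl
  rw [← Equiv.sum_comp φ
    (fun A : Finset (Fin n) => (-1 : ℂ) ^ (Aᶜ.card) * (if R ⊆ A then 1 else 0))]
  have step : ∀ A : Finset (Fin n),
      (-1 : ℂ) ^ ((φ A)ᶜ.card) * (if R ⊆ φ A then 1 else 0)
        = if A ∈ (Rᶜ).powerset then (-1 : ℂ) ^ A.card else 0 := by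
    intro A
    rw [hφ]
    have h1 : (Aᶜ)ᶜ = A := compl_compl A
    have h2 : (R ⊆ Aᶜ) ↔ A ∈ (Rᶜ).powerset := by
      rw [Finset.mem_powerset, ← Finset.compl_subset_compl, compl_compl]
    rw [h1]
    by_cases hc : A ∈ (Rᶜ).powerset
    · rw [if_pos (h2.mpr hc), if_pos hc, mul_one]
    · rw [if_neg (fun hh => hc (h2.mp hh)), if_neg hc, mul_zero]
  rw [Finset.sum_congr rfl (fun A _ => step A), Finset.sum_ite_mem, Finset.univ_inter]
  have hcast : (∑ m ∈ (Rᶜ).powerset, (-1 : ℂ) ^ m.card)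
      = ((∑ m ∈ (Rᶜ).powerset, (-1 : ℤ) ^ m.card : ℤ) : ℂ) := by push_cast; rfl
  rw [hcast, Finset.sum_powerset_neg_one_pow_card]
  have hsurj : Function.Surjective g ↔ Rᶜ = ∅ := by
    rw [Finset.compl_eq_empty_iff, hR]
    constructor
    · intro hs
      ext x
      simp [hs x]
    · intro hu x
      have : x ∈ Finset.image g Finset.univ := by rw [hu]; exact Finset.mem_univ x
      simpa using this
  by_cases hs : Function.Surjective g
  · rw [if_pos (hsurj.mp hs), if_pos hs]; norm_num
  · rw [if_neg (fun hh => hs (hsurj.mpr hh)), if_neg hs]; norm_num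

lemma splitIte (P Q R : Prop) [Decidable P] [Decidable Q] [Decidable R] :
    (if P ∧ Q ∧ R then (1:ℂ) else 0)
      = (if P then 1 else 0) * ((if Q then 1 else 0) * (if R then 1 else 0)) := by
  by_cases p : P <;> by_cases q : Q <;> by_cases r : R <;> simp [p, q, r]

lemma sumSwap3 {ι κ : Type*} [Fintype ι] [Fintype κ] (F : ι → ι → κ → ℂ) :
    (∑ A : ι, ∑ B : ι, ∑ g : κ, F A B g) = ∑ g : κ, ∑ A : ι, ∑ B : ι, F A B g :=
  calc (∑ A : ι, ∑ B : ι, ∑ g : κ, F A B g)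
      = ∑ A : ι, ∑ g : κ, ∑ B : ι, F A B g :=
        Finset.sum_congr rfl fun A _ => Finset.sum_comm
    _ = ∑ g : κ, ∑ A : ι, ∑ B : ι, F A B g := Finset.sum_comm

lemma rearr {ι κ : Type*} [Fintype ι] [Fintype κ]
    (a b : ι → ℂ) (x y : κ → ι → ℂ) (w : κ → ℂ) :
    (∑ A : ι, ∑ B : ι, a A * (b B * ∑ g : κ, x g A * (y g B * w g)))
      = ∑ g : κ, (∑ A : ι, a A * x g A) * ((∑ B : ι, b B * y g B) * w g) := by
  simp only [Finset.mul_sum, Finset.sum_mul]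
  rw [sumSwap3 (fun A B g => a A * (b B * (x g A * (y g B * w g))))]
  refine Finset.sum_congr rfl fun g _ => ?_
  rw [Finset.sum_comm]
  refine Finset.sum_congr rfl fun A _ => Finset.sum_congr rfl fun B _ => ?_
  ring

lemma level {D N n : ℕ} (hD : 1 ≤ D) (hn : n ≤ N)
    (lamn : (Fin D → Equiv.Perm (Fin n)) → ℂ)
    (hinv : ∀ (σ : Fin D → Equiv.Perm (Fin n)) (η ν : Equiv.Perm (Fin n)),
      lamn (fun c => η * σ c * ν) = lamn σ)
    (h0 : ∀ T S : (Fin D → Fin N) → ℂ,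
      ∑ σ : Fin D → Equiv.Perm (Fin n), lamn σ * trInvPure σ T S = 0) :
    ∀ σ : Fin D → Equiv.Perm (Fin n), lamn σ = 0 := by
  classical
  intro σ₀
  set τ : Fin D → Equiv.Perm (Fin n) := fun c => (σ₀ c)⁻¹ with hτ
  have hτinv : σ₀ = fun c => (τ c)⁻¹ := by funext c; rw [hτ]; simp
  -- Step A : inclusion-exclusion over A, B
  have stepA : ∀ σ : Fin D → Equiv.Perm (Fin n),
      (∑ A : Finset (Fin n), ∑ B : Finset (Fin n),
        (-1:ℂ)^(Aᶜ.card) * ((-1:ℂ)^(Bᶜ.card) *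
          trInvPure σ (Tdel (fun s _ => Fin.castLE hn s) A)
            (Tdel (fun s c => Fin.castLE hn (τ c s)) B)))
      = ∑ gh : (Fin n → Fin n) × (Fin n → Fin n),
          (if Function.Surjective gh.1 then (1:ℂ) else 0) *
          ((if Function.Surjective gh.2 then (1:ℂ) else 0) *
           (if ∀ (c : Fin D) (s : Fin n), gh.1 ((σ c)⁻¹ s) = τ c (gh.2 s)
            then (1:ℂ) else 0)) := by
    intro σ
    simp only [trInv_delta hD hn σ τ, splitIte]
    rw [rearr (fun A : Finset (Fin n) => (-1:ℂ)^(Aᶜ.card))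
      (fun B : Finset (Fin n) => (-1:ℂ)^(Bᶜ.card))
      (fun (gh : (Fin n → Fin n) × (Fin n → Fin n)) (A : Finset (Fin n)) =>
        if ∀ s, gh.1 s ∈ A then (1:ℂ) else 0)
      (fun (gh : (Fin n → Fin n) × (Fin n → Fin n)) (B : Finset (Fin n)) =>
        if ∀ s, gh.2 s ∈ B then (1:ℂ) else 0)
      (fun (gh : (Fin n → Fin n) × (Fin n → Fin n)) =>
        if ∀ (c : Fin D) (s : Fin n), gh.1 ((σ c)⁻¹ s) = τ c (gh.2 s)
        then (1:ℂ) else 0)]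
    refine Finset.sum_congr rfl fun gh _ => ?_
    rw [IE gh.1, IE gh.2]
  -- The grand total is zero
  have hzero : (∑ σ : Fin D → Equiv.Perm (Fin n), lamn σ *
      ∑ gh : (Fin n → Fin n) × (Fin n → Fin n),
        (if Function.Surjective gh.1 then (1:ℂ) else 0) *
        ((if Function.Surjective gh.2 then (1:ℂ) else 0) *
         (if ∀ (c : Fin D) (s : Fin n), gh.1 ((σ c)⁻¹ s) = τ c (gh.2 s)
          then (1:ℂ) else 0))) = 0 := by
    have zz : (∑ A : Finset (Fin n), ∑ B : Finset (Fin n),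
        (-1:ℂ)^(Aᶜ.card) * ((-1:ℂ)^(Bᶜ.card) *
          (∑ σ : Fin D → Equiv.Perm (Fin n), lamn σ *
            trInvPure σ (Tdel (fun s _ => Fin.castLE hn s) A)
              (Tdel (fun s c => Fin.castLE hn (τ c s)) B)))) = 0 := by
      refine Finset.sum_eq_zero fun A _ => Finset.sum_eq_zero fun B _ => ?_
      rw [h0, mul_zero, mul_zero]
    refine Eq.trans ?_ zz
    symm
    -- swap the σ-sum outside
    have : ∀ A B : Finset (Fin n),
        (-1:ℂ)^(Aᶜ.card) * ((-1:ℂ)^(Bᶜ.card) *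
          (∑ σ : Fin D → Equiv.Perm (Fin n), lamn σ *
            trInvPure σ (Tdel (fun s _ => Fin.castLE hn s) A)
              (Tdel (fun s c => Fin.castLE hn (τ c s)) B)))
        = ∑ σ : Fin D → Equiv.Perm (Fin n), lamn σ *
            ((-1:ℂ)^(Aᶜ.card) * ((-1:ℂ)^(Bᶜ.card) *
              trInvPure σ (Tdel (fun s _ => Fin.castLE hn s) A)
                (Tdel (fun s c => Fin.castLE hn (τ c s)) B))) := by
      intro A B
      rw [Finset.mul_sum, Finset.mul_sum]
      refine Finset.sum_congr rfl fun σ _ => ?_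
      ring
    simp only [this]
    rw [sumSwap3 (fun A B σ => lamn σ *
      ((-1:ℂ)^(Aᶜ.card) * ((-1:ℂ)^(Bᶜ.card) *
        trInvPure σ (Tdel (fun s _ => Fin.castLE hn s) A)
          (Tdel (fun s c => Fin.castLE hn (τ c s)) B))))]
    refine Finset.sum_congr rfl fun σ _ => ?_
    rw [← stepA σ, Finset.mul_sum]
    refine Finset.sum_congr rfl fun A _ => ?_
    rw [Finset.mul_sum]
  -- swap σ with gh and evaluate the inner sum
  have hswap : (∑ σ : Fin D → Equiv.Perm (Fin n), lamn σ *
      ∑ gh : (Fin n → Fin n) × (Fin n → Fin n),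
        (if Function.Surjective gh.1 then (1:ℂ) else 0) *
        ((if Function.Surjective gh.2 then (1:ℂ) else 0) *
         (if ∀ (c : Fin D) (s : Fin n), gh.1 ((σ c)⁻¹ s) = τ c (gh.2 s)
          then (1:ℂ) else 0)))
      = ∑ gh : (Fin n → Fin n) × (Fin n → Fin n),
          (if Function.Surjective gh.1 then (1:ℂ) else 0) *
          ((if Function.Surjective gh.2 then (1:ℂ) else 0) *
           (∑ σ : Fin D → Equiv.Perm (Fin n), lamn σ *
             (if ∀ (c : Fin D) (s : Fin n), gh.1 ((σ c)⁻¹ s) = τ c (gh.2 s)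
              then (1:ℂ) else 0))) := by
    simp only [Finset.mul_sum]
    rw [Finset.sum_comm]
    refine Finset.sum_congr rfl fun gh _ => Finset.sum_congr rfl fun σ _ => ?_
    ring
  rw [hswap] at hzero
  -- evaluate the inner sum for surjective pairs
  have inner_eval : ∀ gh : (Fin n → Fin n) × (Fin n → Fin n),
      (if Function.Surjective gh.1 then (1:ℂ) else 0) *
      ((if Function.Surjective gh.2 then (1:ℂ) else 0) *
       (∑ σ : Fin D → Equiv.Perm (Fin n), lamn σ *
         (if ∀ (c : Fin D) (s : Fin n), gh.1 ((σ c)⁻¹ s) = τ c (gh.2 s)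
          then (1:ℂ) else 0)))
      = (if Function.Surjective gh.1 then (1:ℂ) else 0) *
        ((if Function.Surjective gh.2 then (1:ℂ) else 0) * lamn σ₀) := by
    rintro ⟨g, h⟩
    by_cases hg : Function.Surjective g
    · by_cases hh : Function.Surjective h
      · have hgb : Function.Bijective g := (Finite.surjective_iff_bijective).mp hg
        have hhb : Function.Bijective h := (Finite.surjective_iff_bijective).mp hh
        set p : Equiv.Perm (Fin n) := Equiv.ofBijective g hgb with hp
        set q : Equiv.Perm (Fin n) := Equiv.ofBijective h hhb with hq
        have hpc : ∀ x, p x = g x := fun _ => rfl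
        have hqc : ∀ x, q x = h x := fun _ => rfl
        set σc : Fin D → Equiv.Perm (Fin n) := fun c => q⁻¹ * (τ c)⁻¹ * p with hσc
        have hcond : ∀ σ : Fin D → Equiv.Perm (Fin n),
            (∀ (c : Fin D) (s : Fin n), g ((σ c)⁻¹ s) = τ c (h s)) ↔ σ = σc := by
          intro σ
          constructor
          · intro hc
            funext c
            ext x
            have := hc c (σ c x)
            rw [Equiv.Perm.inv_def, Equiv.symm_apply_apply] at this
            have h2 : h (σ c x) = (τ c)⁻¹ (g x) := by
              rw [this, Equiv.Perm.inv_def, Equiv.symm_apply_apply]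
            have h3 : q (σ c x) = (τ c)⁻¹ (g x) := by rw [hqc]; exact h2
            have h4 : σ c x = q⁻¹ ((τ c)⁻¹ (g x)) := by
              rw [← h3, Equiv.Perm.inv_def, Equiv.symm_apply_apply]
            rw [h4, hσc]
            simp only [Equiv.Perm.mul_apply]
            rw [hpc]
          · rintro rfl
            intro c s
            have : (σc c)⁻¹ s = p⁻¹ (τ c (q s)) := by
              rw [hσc]
              simp [mul_assoc]
            rw [this, ← hpc, Equiv.Perm.inv_def, Equiv.apply_symm_apply, hqc]
        have : (∑ σ : Fin D → Equiv.Perm (Fin n), lamn σ *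
            (if ∀ (c : Fin D) (s : Fin n), g ((σ c)⁻¹ s) = τ c (h s)
             then (1:ℂ) else 0)) = lamn σc := by
          calc (∑ σ : Fin D → Equiv.Perm (Fin n), lamn σ *
              (if ∀ (c : Fin D) (s : Fin n), g ((σ c)⁻¹ s) = τ c (h s)
               then (1:ℂ) else 0))
              = ∑ σ : Fin D → Equiv.Perm (Fin n), if σ = σc then lamn σ else 0 := by
                refine Finset.sum_congr rfl fun σ _ => ?_
                rw [mul_ite, mul_one, mul_zero]
                by_cases hcc : σ = σc
                · rw [if_pos ((hcond σ).mpr hcc), if_pos hcc]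
                · rw [if_neg (fun hx => hcc ((hcond σ).mp hx)), if_neg hcc]
            _ = lamn σc := by
                rw [Finset.sum_ite_eq' Finset.univ σc lamn]
                exact if_pos (Finset.mem_univ _)
        rw [this]
        have : lamn σc = lamn σ₀ := by
          rw [hσc, hτinv]
          exact hinv (fun c => (τ c)⁻¹) q⁻¹ p
        rw [this]
      · rw [if_neg hh]; ring
    · rw [if_neg hg]; ring
  rw [Finset.sum_congr rfl (fun gh _ => inner_eval gh)] at hzero
  -- factor out and count
  have hfact : (∑ gh : (Fin n → Fin n) × (Fin n → Fin n),
      (if Function.Surjective gh.1 then (1:ℂ) else 0) *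
      ((if Function.Surjective gh.2 then (1:ℂ) else 0) * lamn σ₀))
      = (∑ g : Fin n → Fin n, if Function.Surjective g then (1:ℂ) else 0) *
        ((∑ g : Fin n → Fin n, if Function.Surjective g then (1:ℂ) else 0) * lamn σ₀) := by
    rw [Fintype.sum_prod_type]
    rw [Finset.sum_mul]
    refine Finset.sum_congr rfl fun g _ => ?_
    rw [Finset.sum_mul, Finset.mul_sum]
  rw [hfact] at hzero
  have hcard : (∑ g : Fin n → Fin n, if Function.Surjective g then (1:ℂ) else 0) ≠ 0 := by
    rw [Finset.sum_boole]
    have : id ∈ Finset.univ.filter (fun g : Fin n → Fin n => Function.Surjective g) := by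
      simp [Function.surjective_id]
    have hpos : 0 < (Finset.univ.filter
        (fun g : Fin n → Fin n => Function.Surjective g)).card :=
      Finset.card_pos.mpr ⟨id, this⟩
    exact Nat.cast_ne_zero.mpr hpos.ne'
  rcases mul_eq_zero.mp hzero with h | h
  · exact absurd h hcard
  rcases mul_eq_zero.mp h with h' | h'
  · exact absurd h' hcard
  exact h'

/-- Linear independence of the pure trace-invariants (one per left-right
equivalence class) for `N` large enough. -/
theorem pure_trace_invariants_linearly_independent
    (D nmax : ℕ) (hD : 1 ≤ D) (hmax : 1 ≤ nmax) :
    ∃ N₀ : ℕ, ∀ N : ℕ, N₀ ≤ N →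
      ∀ lam : (n : ℕ) → (Fin D → Equiv.Perm (Fin n)) → ℂ,
        (∀ n, 1 ≤ n → n ≤ nmax →
          ∀ (σ : Fin D → Equiv.Perm (Fin n)) (η ν : Equiv.Perm (Fin n)),
            lam n (fun c => η * σ c * ν) = lam n σ) →
        (∀ T S : (Fin D → Fin N) → ℂ,
          ∑ n ∈ Finset.Icc 1 nmax,
            ∑ σ : Fin D → Equiv.Perm (Fin n), lam n σ * trInvPure σ T S = 0) →
        ∀ n, 1 ≤ n → n ≤ nmax →
          ∀ σ : Fin D → Equiv.Perm (Fin n), lam n σ = 0 := by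
  refine ⟨nmax, fun N hN lam hlam H n h1 h2 σ => ?_⟩
  have hn : n ≤ N := le_trans h2 hN
  have h0 : ∀ T S : (Fin D → Fin N) → ℂ,
      ∑ σ : Fin D → Equiv.Perm (Fin n), lam n σ * trInvPure σ T S = 0 :=
    fun T S => sep lam H T S n (Finset.mem_Icc.mpr ⟨h1, h2⟩)
  exact level hD hn (lam n) (fun σ' η ν => hlam n h1 h2 σ' η ν) h0 σ
end

section
/- Let N ≥ 1 and let A be an N×N complex matrix which is Hermitian, such that the real part of every diagonal entry is positive ((A i i).re > 0 for all i), and such that for all i ≠ j the norm of the off-diagonal entry satisfies ‖A i j‖ ≤ Real.sqrt ((A i i).re * (A j j).re) / N. Then A is positive definite; in particular A is invertible. -/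
open ComplexOrder in
/-- A Hermitian complex matrix with positive diagonal (real parts) whose
off-diagonal entries satisfy `‖A i j‖ ≤ √((A i i).re * (A j j).re) / N` is
positive definite; in particular it is invertible. -/
theorem posDef_of_small_off_diagonal
    (N : ℕ) (hN : 1 ≤ N) (A : Matrix (Fin N) (Fin N) ℂ)
    (hHerm : A.IsHermitian)
    (hdiag : ∀ i, 0 < (A i i).re)
    (hoff : ∀ i j, i ≠ j →
      ‖A i j‖ ≤ Real.sqrt ((A i i).re * (A j j).re) / N) :
    A.PosDef ∧ IsUnit A := by
  have hNpos : (0:ℝ) < N := by exact_mod_cast hN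
  have hPD : A.PosDef := by
    refine Matrix.PosDef.of_dotProduct_mulVec_pos hHerm fun x hx => ?_
    set Q : ℂ := dotProduct (star x) (A.mulVec x) with hQdef
    have hQsum : Q = ∑ i, ∑ j, (starRingEnd ℂ) (x i) * A i j * x j := by
      simp [hQdef, dotProduct, Matrix.mulVec, Finset.mul_sum, mul_assoc]
    -- imaginary part vanishes
    have hstar : (starRingEnd ℂ) Q = Q := by
      rw [hQsum, map_sum, Finset.sum_comm]
      refine Finset.sum_congr rfl fun i _ => ?_
      rw [map_sum]
      refine Finset.sum_congr rfl fun j _ => ?_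
      have h1 : (starRingEnd ℂ) (A i j) = A j i := hHerm.apply j i
      rw [map_mul, map_mul, h1, Complex.conj_conj]
      ring
    have him : Q.im = 0 := (Complex.conj_eq_iff_im).mp hstar
    -- real part bound
    set d : Fin N → ℝ := fun i => (A i i).re with hd
    set v : Fin N → ℝ := fun i => Real.sqrt (d i) * ‖x i‖ with hv
    have hvnonneg : ∀ i, 0 ≤ v i := fun i => by positivity
    have hterm : ∀ i j, (if i = j then v i ^ 2 + v i ^ 2 / N else 0) - v i * v j / N
        ≤ ((starRingEnd ℂ) (x i) * A i j * x j).re := by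
      intro i j
      have hv2 : ∀ k, v k ^ 2 = d k * ‖x k‖ ^ 2 := fun k => by
        rw [hv]; simp only []; rw [mul_pow, Real.sq_sqrt (hdiag k).le]
      by_cases hij : i = j
      · subst hij
        rw [if_pos rfl]
        have heq : (starRingEnd ℂ) (x i) * A i i * x i = A i i * Complex.normSq (x i) := by
          rw [mul_comm ((starRingEnd ℂ) (x i)) (A i i), mul_assoc, Complex.normSq_eq_conj_mul_self]
        have hre : ((starRingEnd ℂ) (x i) * A i i * x i).re = v i ^ 2 := by
          rw [heq, hv2 i]
          simp [Complex.mul_re, Complex.normSq_eq_norm_sq, hd,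
            ← Complex.ofReal_pow]
        have hsq : v i ^ 2 = v i * v i := sq (v i)
        rw [hre, hsq]
        linarith
      · rw [if_neg hij]
        have hnorm : ‖(starRingEnd ℂ) (x i) * A i j * x j‖ ≤ v i * v j / N := by
          rw [norm_mul, norm_mul]
          have h2 : Real.sqrt (d i * d j) = Real.sqrt (d i) * Real.sqrt (d j) :=
            Real.sqrt_mul (hdiag i).le _
          calc ‖(starRingEnd ℂ) (x i)‖ * ‖A i j‖ * ‖x j‖
              ≤ ‖x i‖ * (Real.sqrt (d i) * Real.sqrt (d j) / N) * ‖x j‖ := by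
                rw [RCLike.norm_conj]
                refine mul_le_mul_of_nonneg_right
                  (mul_le_mul_of_nonneg_left ?_ (norm_nonneg _)) (norm_nonneg _)
                rw [← h2]; exact hoff i j hij
            _ = v i * v j / N := by rw [hv]; ring
        have h3 : |((starRingEnd ℂ) (x i) * A i j * x j).re|
            ≤ ‖(starRingEnd ℂ) (x i) * A i j * x j‖ :=
          Complex.abs_re_le_norm _
        have h4 := neg_abs_le ((starRingEnd ℂ) (x i) * A i j * x j).re
        simp only [zero_sub]
        linarith
    have hsum : (∑ i, ∑ j, ((if i = j then v i ^ 2 + v i ^ 2 / N else 0) - v i * v j / N))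
        ≤ Q.re := by
      rw [hQsum, Complex.re_sum]
      refine Finset.sum_le_sum fun i _ => ?_
      rw [Complex.re_sum]
      exact Finset.sum_le_sum fun j _ => hterm i j
    have hCS : (∑ i, v i) ^ 2 ≤ (N : ℝ) * ∑ i, v i ^ 2 := by
      have := sq_sum_le_card_mul_sum_sq (s := (Finset.univ : Finset (Fin N))) (f := v)
      simpa using this
    have hinner : ∀ i : Fin N, ∑ j, ((if i = j then v i ^ 2 + v i ^ 2 / N else 0) - v i * v j / N)
        = (v i ^ 2 + v i ^ 2 / N) - v i * (∑ j, v j) / N := by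
      intro i
      rw [Finset.sum_sub_distrib]
      congr 1
      · simp
      · rw [← Finset.sum_div, ← Finset.mul_sum]
    have hsum2 : (∑ i, ∑ j, ((if i = j then v i ^ 2 + v i ^ 2 / N else 0) - v i * v j / N))
        = ((∑ i, v i ^ 2) + (∑ i, v i ^ 2) / N) - (∑ i, v i) ^ 2 / N := by
      rw [Finset.sum_congr rfl fun i _ => hinner i, Finset.sum_sub_distrib,
        Finset.sum_add_distrib, ← Finset.sum_div]
      congr 1
      rw [← Finset.sum_div, ← Finset.sum_mul, sq]
    obtain ⟨i0, hi0⟩ : ∃ i, x i ≠ 0 := Function.ne_iff.mp hx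
    have hvpos : 0 < v i0 ^ 2 := by
      have : 0 < v i0 := mul_pos (Real.sqrt_pos.mpr (hdiag i0)) (norm_pos_iff.mpr hi0)
      positivity
    have hSpos : 0 < ∑ i, v i ^ 2 :=
      Finset.sum_pos' (fun i _ => sq_nonneg _) ⟨i0, Finset.mem_univ _, hvpos⟩
    have hQre : 0 < Q.re := by
      rw [hsum2] at hsum
      clear hterm hinner hQsum hstar hsum2
      set S := ∑ i, v i ^ 2 with hS
      set T := ∑ i, v i with hT
      clear_value S T
      have h5 : T ^ 2 / N ≤ S := by
        rw [div_le_iff₀ hNpos]; linarith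
      have h6 : 0 < S / N := div_pos hSpos hNpos
      have h7 : S + S / N - T ^ 2 / N ≥ S / N := by linarith
      linarith
    rw [Complex.lt_def]
    exact ⟨by simpa using hQre, by simp [him]⟩
  exact ⟨hPD, hPD.isUnit⟩
end

section
/- Let n ≥ 1, D ≥ 1 and let σ be a D-tuple of permutations of Fin n with K_p(σ) = 1 (purely connected). Then for every permutation η of Fin n one has the identity ∇(σ;η) = (D−1)·ω̄(σ;η) − ω(σ), and ∇(σ;η) ≥ 0; in particular (D−1)·ω̄(σ;η) ≥ ω(σ), with equality if and only if ∇(σ;η) = 0 (i.e. η renders σ compatible). -/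
/-- `#π`: the number of orbits of a permutation of `Fin n`
(its cycles, counting fixed points). -/
def permOrbits {n : ℕ} (π : Equiv.Perm (Fin n)) : ℕ :=
  Multiset.card π.cycleType + (Finset.univ.filter fun x => π x = x).card

/-- `|π| = n - #π`, the minimal number of transpositions whose product is `π`. -/
def permLen {n : ℕ} (π : Equiv.Perm (Fin n)) : ℕ := n - permOrbits π

/-- The bipartite graph on `Fin n ⊕ Fin n` with an edge between `inl s` and
`inr t` exactly when `t = σ_c s` for some component `σ_c` of the tuple. -/
def pairGraph {n D : ℕ} (σ : Fin D → Equiv.Perm (Fin n)) :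
    SimpleGraph ((Fin n) ⊕ (Fin n)) :=
  SimpleGraph.fromRel fun a b =>
    ∃ s t : Fin n, a = Sum.inl s ∧ b = Sum.inr t ∧ ∃ c, σ c s = t

/-- `K_p(σ)`: the number of pure connected components of `σ`. -/
noncomputable def Kp {n D : ℕ} (σ : Fin D → Equiv.Perm (Fin n)) : ℕ :=
  Nat.card (pairGraph σ).ConnectedComponent

/-- `d(σ,η) = Σ_c |σ_c η⁻¹|`. -/
def dEta {n D : ℕ} (σ : Fin D → Equiv.Perm (Fin n)) (η : Equiv.Perm (Fin n)) : ℕ :=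
  ∑ c, permLen (σ c * η⁻¹)

/-- `d(σ,τ) = Σ_c |σ_c τ_c⁻¹|`. -/
def dTuple {n D : ℕ} (σ τ : Fin D → Equiv.Perm (Fin n)) : ℕ :=
  ∑ c, permLen (σ c * (τ c)⁻¹)

/-- The degree `ω(σ) = Σ_{c₁<c₂} |σ_{c₁} σ_{c₂}⁻¹| − (D−1)(n − K_p(σ))`,
an integer. -/
noncomputable def degInv {n D : ℕ} (σ : Fin D → Equiv.Perm (Fin n)) : ℤ :=
  (∑ p ∈ Finset.univ.filter (fun p : Fin D × Fin D => p.1 < p.2),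
      (permLen (σ p.1 * (σ p.2)⁻¹) : ℤ)) -
    ((D : ℤ) - 1) * ((n : ℤ) - (Kp σ : ℤ))

/-- `ω̄(σ;η) = D·K_p(σ⌢η) − (D−1)·K_p(σ) − n + d(σ,η)`, an integer. -/
noncomputable def omegaBar {n D : ℕ} (σ : Fin D → Equiv.Perm (Fin n))
    (η : Equiv.Perm (Fin n)) : ℤ :=
  (D : ℤ) * (Kp (Fin.snoc σ η : Fin (D + 1) → Equiv.Perm (Fin n)) : ℤ) -
    ((D : ℤ) - 1) * (Kp σ : ℤ) - (n : ℤ) + (dEta σ η : ℤ)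

/-- `∇(σ;η) = Σ_{c₁<c₂} ( |σ_{c₁} η⁻¹| + |σ_{c₂} η⁻¹| − |σ_{c₁} σ_{c₂}⁻¹| )`,
an integer. -/
noncomputable def nablaInv {n D : ℕ} (σ : Fin D → Equiv.Perm (Fin n))
    (η : Equiv.Perm (Fin n)) : ℤ :=
  ∑ p ∈ Finset.univ.filter (fun p : Fin D × Fin D => p.1 < p.2),
    ((permLen (σ p.1 * η⁻¹) : ℤ) + (permLen (σ p.2 * η⁻¹) : ℤ) -
      (permLen (σ p.1 * (σ p.2)⁻¹) : ℤ))

open Equiv Equiv.Perm Finset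

namespace GGAux

variable {α : Type*} [Fintype α] [DecidableEq α]

/-- reflection length: support size minus number of nontrivial cycles -/
def gg (f : Perm α) : ℕ := f.support.card - Multiset.card f.cycleType

lemma card_cycleType_le (f : Perm α) : Multiset.card f.cycleType ≤ f.support.card := by
  rw [← Equiv.Perm.sum_cycleType]
  have : ∀ m : Multiset ℕ, (∀ x ∈ m, 1 ≤ x) → Multiset.card m ≤ m.sum := by
    intro m
    induction m using Multiset.induction with
    | empty => simp
    | cons a s ih =>
      intro h
      rw [Multiset.card_cons, Multiset.sum_cons]
      have h1 := h a (Multiset.mem_cons_self a s)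
      have h2 := ih fun x hx => h x (Multiset.mem_cons_of_mem hx)
      omega
  exact this _ fun x hx => le_trans one_le_two (Equiv.Perm.two_le_of_mem_cycleType hx)

lemma gg_one : gg (1 : Perm α) = 0 := by simp [gg]

lemma gg_inv (f : Perm α) : gg f⁻¹ = gg f := by
  rw [gg, gg, Equiv.Perm.support_inv, Equiv.Perm.cycleType_inv]

lemma gg_disjoint {f g : Perm α} (h : Equiv.Perm.Disjoint f g) :
    gg (f * g) = gg f + gg g := by
  have h1 := h.card_support_mul
  have h2 := h.cycleType_mul
  have h3 := card_cycleType_le f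
  have h4 := card_cycleType_le g
  rw [gg, gg, gg, h1, h2]
  simp only [Multiset.card_add]
  omega

lemma gg_swap_mul {f : Perm α} {x : α} (hx : f x ≠ x) :
    gg f = gg (Equiv.swap x (f x) * f) + 1 := by
  classical
  -- cycle case first
  have cyc : ∀ c : Perm α, c.IsCycle → c x ≠ x →
      gg c = gg (Equiv.swap x (c x) * c) + 1 := by
    intro c hc hcx
    by_cases h2 : c (c x) = x
    · have hce : c = Equiv.swap x (c x) := hc.eq_swap_of_apply_apply_eq_self hcx h2
      have : Equiv.swap x (c x) * c = 1 := by
        nth_rewrite 2 [hce]; rw [Equiv.swap_mul_self]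
      rw [this, gg_one, gg, hc.cycleType]
      rw [hce, Equiv.Perm.card_support_swap hcx.symm]
      simp [Equiv.Perm.card_support_swap hcx.symm]
    · have hc' : (Equiv.swap x (c x) * c).IsCycle := hc.swap_mul hcx h2
      have hsupp : (Equiv.swap x (c x) * c).support = c.support \ {x} :=
        Equiv.Perm.support_swap_mul_eq c x h2
      have hxmem : x ∈ c.support := Equiv.Perm.mem_support.mpr hcx
      have hcard : (Equiv.swap x (c x) * c).support.card = c.support.card - 1 := by
        rw [hsupp, Finset.sdiff_singleton_eq_erase, Finset.card_erase_of_mem hxmem]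
      have h2le : 2 ≤ c.support.card := hc.two_le_card_support
      rw [gg, gg, hc.cycleType, hc'.cycleType, hcard]
      simp only [Multiset.card_singleton]
      omega
  -- general case via cycle factor decomposition
  set c := f.cycleOf x with hcdef
  have hc : c.IsCycle := Equiv.Perm.isCycle_cycleOf f hx
  have hcx : c x = f x := Equiv.Perm.cycleOf_apply_self f x
  have hmem : c ∈ f.cycleFactorsFinset :=
    Equiv.Perm.cycleOf_mem_cycleFactorsFinset_iff.mpr (Equiv.Perm.mem_support.mpr hx)
  have hd : Equiv.Perm.Disjoint (f * c⁻¹) c :=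
    Equiv.Perm.disjoint_mul_inv_of_mem_cycleFactorsFinset hmem
  set d := f * c⁻¹ with hddef
  have hf : f = d * c := by rw [hddef]; group
  have hcomm : d * c = c * d := hd.commute
  have hkey : Equiv.swap x (f x) * f = (Equiv.swap x (c x) * c) * d := by
    rw [hcx, hf, hcomm, ← mul_assoc]
  -- disjointness of swap*c with d
  have hsupp_tc : (Equiv.swap x (c x) * c).support ⊆ c.support := by
    refine (Equiv.Perm.support_mul_le _ _).trans ?_
    rw [sup_le_iff]
    have hxc : x ∈ c.support := Equiv.Perm.mem_support.mpr (by rw [hcx]; exact hx)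
    have hfxc : c x ∈ c.support := Equiv.Perm.apply_mem_support.mpr hxc
    have hne : x ≠ c x := by rw [hcx]; exact (Ne.symm hx)
    constructor
    · rw [Equiv.Perm.support_swap hne]
      intro a ha
      simp only [Finset.mem_insert, Finset.mem_singleton] at ha
      rcases ha with rfl | rfl
      · exact hxc
      · exact hfxc
    · exact le_rfl
  have hdisj : Equiv.Perm.Disjoint (Equiv.swap x (c x) * c) d := by
    rw [Equiv.Perm.disjoint_iff_disjoint_support]
    have := Equiv.Perm.disjoint_iff_disjoint_support.mp hd
    exact (Finset.disjoint_of_subset_left hsupp_tc this.symm)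
  rw [hkey, gg_disjoint hdisj, hf, gg_disjoint hd, cyc c hc (by rw [hcx]; exact hx)]
  omega

end GGAux

namespace GGAux

variable {α : Type*} [Fintype α] [DecidableEq α]

lemma gg_swap_fix {f : Perm α} {u v : α} (hu : f u = u) (huv : u ≠ v) :
    gg (Equiv.swap u v * f) = gg f + 1 := by
  have h : (Equiv.swap u v * f) u = v := by
    simp [Equiv.Perm.mul_apply, hu]
  have hne : (Equiv.swap u v * f) u ≠ u := by rw [h]; exact huv.symm
  have key := gg_swap_mul hne
  rw [h] at key
  rw [← mul_assoc, Equiv.swap_mul_self, one_mul] at key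
  omega

lemma gg_swap_le_aux : ∀ (N : ℕ) (f : Perm α) (u v : α), u ≠ v → gg f ≤ N →
    gg (Equiv.swap u v * f) ≤ gg f + 1 := by
  intro N
  induction N with
  | zero =>
    intro f u v huv hN
    by_cases hu : f u = u
    · rw [gg_swap_fix hu huv]
    · have := gg_swap_mul hu
      omega
  | succ N ih =>
    intro f u v huv hN
    by_cases hu : f u = u
    · rw [gg_swap_fix hu huv]
    · by_cases hv : f u = v
      · have := gg_swap_mul hu
        rw [hv] at this
        omega
      · -- f u ∉ {u, v}
        set w := f u with hw
        have hwu : w ≠ u := hu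
        have hwv : w ≠ v := hv
        set f₁ := Equiv.swap u w * f with hf₁
        have hgf : gg f = gg f₁ + 1 := gg_swap_mul hu
        have hf₁u : f₁ u = u := by
          rw [hf₁]
          simp [Equiv.Perm.mul_apply, ← hw]
        have hfact : f = Equiv.swap u w * f₁ := by
          rw [hf₁, ← mul_assoc, Equiv.swap_mul_self, one_mul]
        -- swap identity: swap u v * swap u w = swap u w * swap w v
        have hswid : Equiv.swap u v * Equiv.swap u w
            = Equiv.swap u w * Equiv.swap w v := by
          have h3 := Equiv.swap_mul_swap_mul_swap (x := v) (y := u) (z := w)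
            (Ne.symm huv) hwv.symm
          -- swap u w * swap v u * swap u w = swap w v
          calc Equiv.swap u v * Equiv.swap u w
              = Equiv.swap u w * (Equiv.swap u w * Equiv.swap u v * Equiv.swap u w) := by
                rw [← mul_assoc, ← mul_assoc, Equiv.swap_mul_self, one_mul]
            _ = Equiv.swap u w * Equiv.swap w v := by
                rw [Equiv.swap_comm u v, h3]
        have hrw : Equiv.swap u v * f
            = Equiv.swap u w * (Equiv.swap w v * f₁) := by
          rw [hfact, ← mul_assoc, hswid, mul_assoc]
        have hinner : gg (Equiv.swap w v * f₁) ≤ gg f₁ + 1 :=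
          ih f₁ w v (fun h => hwv h) (by omega)
        have houter_u : (Equiv.swap w v * f₁) u = u := by
          simp [Equiv.Perm.mul_apply, hf₁u,
            Equiv.swap_apply_of_ne_of_ne (Ne.symm hwu) huv]
        rw [hrw, gg_swap_fix houter_u hwu.symm]
        omega

lemma gg_swap_le (f : Perm α) {u v : α} (huv : u ≠ v) :
    gg (Equiv.swap u v * f) ≤ gg f + 1 :=
  gg_swap_le_aux (gg f) f u v huv le_rfl

lemma gg_factor_aux : ∀ (N : ℕ) (f : Perm α), f.support.card ≤ N →
    ∃ l : List (Perm α), (∀ τ ∈ l, ∃ a b, a ≠ b ∧ τ = Equiv.swap a b) ∧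
      l.prod = f ∧ l.length = gg f := by
  intro N
  induction N with
  | zero =>
    intro f hf
    have : f = 1 := by
      ext a
      by_contra h
      have : a ∈ f.support := Equiv.Perm.mem_support.mpr (by simpa using h)
      have := Finset.card_pos.mpr ⟨a, this⟩
      omega
    exact ⟨[], by simp, by simp [this], by simp [this, gg_one]⟩
  | succ N ih =>
    intro f hf
    by_cases h1 : f = 1
    · exact ⟨[], by simp, by simp [h1], by simp [h1, gg_one]⟩
    · obtain ⟨x, hx⟩ : ∃ x, f x ≠ x := by
        by_contra h
        push_neg at h
        exact h1 (Equiv.ext h)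
      have hlt := Equiv.Perm.card_support_swap_mul hx
      obtain ⟨l, hl1, hl2, hl3⟩ := ih (Equiv.swap x (f x) * f) (by omega)
      refine ⟨Equiv.swap x (f x) :: l, ?_, ?_, ?_⟩
      · intro τ hτ
        rcases List.mem_cons.mp hτ with rfl | h
        · exact ⟨x, f x, Ne.symm hx, rfl⟩
        · exact hl1 τ h
      · rw [List.prod_cons, hl2, ← mul_assoc, Equiv.swap_mul_self, one_mul]
      · rw [List.length_cons, hl3]
        have := gg_swap_mul hx
        omega

lemma gg_mul_le (a b : Perm α) : gg (a * b) ≤ gg a + gg b := by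
  obtain ⟨l, hl1, hl2, hl3⟩ := gg_factor_aux a.support.card a le_rfl
  subst hl2
  rw [← hl3]
  clear hl3
  induction l with
  | nil => simp
  | cons τ l ih =>
    have hmem : ∀ τ' ∈ l, ∃ a b, a ≠ b ∧ τ' = Equiv.swap a b :=
      fun τ' h => hl1 τ' (List.mem_cons_of_mem _ h)
    obtain ⟨x, y, hxy, rfl⟩ := hl1 τ List.mem_cons_self
    have hih := ih hmem
    rw [List.prod_cons, mul_assoc, List.length_cons]
    have h2 : gg (Equiv.swap x y * (l.prod * b)) ≤ gg (l.prod * b) + 1 :=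
      gg_swap_le _ hxy
    omega

end GGAux

namespace GGAux

lemma permLen_eq_gg {n : ℕ} (π : Perm (Fin n)) : permLen π = gg π := by
  have hfix : (Finset.univ.filter fun x => π x = x) = π.supportᶜ := by
    ext a
    simp [Equiv.Perm.mem_support]
  have hs : π.support.card ≤ n := by
    have := Finset.card_le_univ π.support
    simpa using this
  have hk := card_cycleType_le π
  rw [permLen, permOrbits, hfix, Finset.card_compl, Fintype.card_fin, gg]
  omega

lemma permLen_inv {n : ℕ} (π : Perm (Fin n)) : permLen π⁻¹ = permLen π := by
  rw [permLen_eq_gg, permLen_eq_gg, gg_inv]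

lemma permLen_mul_le {n : ℕ} (a b : Perm (Fin n)) :
    permLen (a * b) ≤ permLen a + permLen b := by
  rw [permLen_eq_gg, permLen_eq_gg, permLen_eq_gg]
  exact gg_mul_le a b

lemma permLen_triangle {n : ℕ} (a b c : Perm (Fin n)) :
    permLen (a * b⁻¹) ≤ permLen (a * c⁻¹) + permLen (b * c⁻¹) := by
  have h : a * b⁻¹ = (a * c⁻¹) * (b * c⁻¹)⁻¹ := by group
  rw [h]
  calc permLen ((a * c⁻¹) * (b * c⁻¹)⁻¹)
      ≤ permLen (a * c⁻¹) + permLen (b * c⁻¹)⁻¹ := permLen_mul_le _ _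
    _ = permLen (a * c⁻¹) + permLen (b * c⁻¹) := by rw [permLen_inv]

-- pair sum lemma
lemma pair_sum {D : ℕ} (hD : 1 ≤ D) (F : Fin D → ℤ) :
    ∑ p ∈ Finset.univ.filter (fun p : Fin D × Fin D => p.1 < p.2), (F p.1 + F p.2)
      = ((D : ℤ) - 1) * ∑ c, F c := by
  classical
  have hswap : ∑ p ∈ Finset.univ.filter (fun p : Fin D × Fin D => p.1 < p.2), F p.2
      = ∑ p ∈ Finset.univ.filter (fun p : Fin D × Fin D => p.2 < p.1), F p.1 := by
    refine Finset.sum_nbij' (fun p => Prod.swap p) (fun p => Prod.swap p) ?_ ?_ ?_ ?_ ?_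
    · intro p hp; simp only [Finset.mem_filter, Finset.mem_univ, true_and] at hp ⊢
      simpa using hp
    · intro p hp; simp only [Finset.mem_filter, Finset.mem_univ, true_and] at hp ⊢
      simpa using hp
    · intro p _; simp
    · intro p _; simp
    · intro p _; simp
  have hunion : ∑ p ∈ Finset.univ.filter (fun p : Fin D × Fin D => p.1 < p.2), F p.1
      + ∑ p ∈ Finset.univ.filter (fun p : Fin D × Fin D => p.2 < p.1), F p.1
      = ∑ p ∈ Finset.univ.filter (fun p : Fin D × Fin D => p.1 ≠ p.2), F p.1 := by
    rw [← Finset.sum_union]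
    · congr 1
      ext p
      simp only [Finset.mem_union, Finset.mem_filter, Finset.mem_univ, true_and]
      constructor
      · rintro (h | h)
        · exact ne_of_lt h
        · exact (ne_of_lt h).symm
      · intro h
        rcases lt_or_gt_of_ne h with h | h
        · exact Or.inl h
        · exact Or.inr h
    · rw [Finset.disjoint_filter]
      intro p _ h1
      simp only [not_lt]
      exact le_of_lt h1
  have hne : ∑ p ∈ Finset.univ.filter (fun p : Fin D × Fin D => p.1 ≠ p.2), F p.1
      = ((D : ℤ) - 1) * ∑ c, F c := by
    rw [Finset.sum_filter, Fintype.sum_prod_type]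
    have : ∀ c1 : Fin D, (∑ c2 : Fin D, if c1 ≠ c2 then F c1 else 0)
        = ((D : ℤ) - 1) * F c1 := by
      intro c1
      rw [← Finset.sum_filter]
      rw [Finset.sum_const]
      have hcard : (Finset.univ.filter fun c2 : Fin D => c1 ≠ c2).card = D - 1 := by
        have : (Finset.univ.filter fun c2 : Fin D => c1 ≠ c2) = Finset.univ.erase c1 := by
          ext a
          simp [ne_comm, Finset.mem_erase]
        rw [this, Finset.card_erase_of_mem (Finset.mem_univ c1)]
        simp
      rw [hcard]
      have : ((D - 1 : ℕ) : ℤ) = (D : ℤ) - 1 := by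
        push_cast [Nat.cast_sub hD]
        ring
      rw [nsmul_eq_mul, this]
    rw [Finset.sum_congr rfl fun c1 _ => this c1, ← Finset.mul_sum]
  calc ∑ p ∈ Finset.univ.filter (fun p : Fin D × Fin D => p.1 < p.2), (F p.1 + F p.2)
      = ∑ p ∈ Finset.univ.filter (fun p : Fin D × Fin D => p.1 < p.2), F p.1
        + ∑ p ∈ Finset.univ.filter (fun p : Fin D × Fin D => p.1 < p.2), F p.2 :=
        Finset.sum_add_distrib
    _ = ((D : ℤ) - 1) * ∑ c, F c := by rw [hswap, hunion, hne]

end GGAux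




lemma pairGraph_le_snoc {n D : ℕ} (σ : Fin D → Equiv.Perm (Fin n))
    (η : Equiv.Perm (Fin n)) :
    pairGraph σ ≤ pairGraph (Fin.snoc σ η : Fin (D + 1) → Equiv.Perm (Fin n)) := by
  intro a b hab
  rw [pairGraph, SimpleGraph.fromRel_adj] at hab ⊢
  refine ⟨hab.1, ?_⟩
  rcases hab.2 with ⟨s, t, h1, h2, c, h3⟩ | ⟨s, t, h1, h2, c, h3⟩
  · exact Or.inl ⟨s, t, h1, h2, c.castSucc, by rw [Fin.snoc_castSucc]; exact h3⟩
  · exact Or.inr ⟨s, t, h1, h2, c.castSucc, by rw [Fin.snoc_castSucc]; exact h3⟩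

lemma Kp_snoc_eq_one {n D : ℕ} (hn : 1 ≤ n) (σ : Fin D → Equiv.Perm (Fin n))
    (η : Equiv.Perm (Fin n)) (hK : Kp σ = 1) :
    Kp (Fin.snoc σ η : Fin (D + 1) → Equiv.Perm (Fin n)) = 1 := by
  have hnv : Nonempty ((Fin n) ⊕ (Fin n)) := ⟨Sum.inl ⟨0, hn⟩⟩
  have hsub : Subsingleton (pairGraph σ).ConnectedComponent :=
    (Nat.card_eq_one_iff_unique.mp hK).1
  have hle := pairGraph_le_snoc σ η
  have hpre : ∀ u v : (Fin n) ⊕ (Fin n),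
      (pairGraph (Fin.snoc σ η : Fin (D + 1) → Equiv.Perm (Fin n))).Reachable u v := by
    intro u v
    have h : (pairGraph σ).connectedComponentMk u = (pairGraph σ).connectedComponentMk v :=
      Subsingleton.elim _ _
    exact (SimpleGraph.ConnectedComponent.exact h).mono hle
  rw [Kp, Nat.card_eq_one_iff_unique]
  constructor
  · constructor
    intro c d
    refine SimpleGraph.ConnectedComponent.ind₂ (fun u v => ?_) c d
    exact SimpleGraph.ConnectedComponent.sound (hpre u v)
  · exact ⟨(pairGraph _).connectedComponentMk (Sum.inl ⟨0, hn⟩)⟩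


/-- For a purely connected tuple `σ` and any `η`:
`∇(σ;η) = (D−1)·ω̄(σ;η) − ω(σ)` and `∇(σ;η) ≥ 0`; in particular
`(D−1)·ω̄(σ;η) ≥ ω(σ)`, with equality iff `∇(σ;η) = 0`. -/
theorem nabla_eq_and_nonneg
    (n D : ℕ) (hn : 1 ≤ n) (hD : 1 ≤ D)
    (σ : Fin D → Equiv.Perm (Fin n)) (hK : Kp σ = 1) :
    ∀ η : Equiv.Perm (Fin n),
      nablaInv σ η = ((D : ℤ) - 1) * omegaBar σ η - degInv σ ∧
        0 ≤ nablaInv σ η ∧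
        degInv σ ≤ ((D : ℤ) - 1) * omegaBar σ η ∧
        (degInv σ = ((D : ℤ) - 1) * omegaBar σ η ↔ nablaInv σ η = 0) := by
  intro η
  classical
  have hK1 : Kp (Fin.snoc σ η : Fin (D + 1) → Equiv.Perm (Fin n)) = 1 :=
    Kp_snoc_eq_one hn σ η hK
  set A : Fin D → ℤ := fun c => (permLen (σ c * η⁻¹) : ℤ) with hA
  set B : Fin D × Fin D → ℤ := fun p => (permLen (σ p.1 * (σ p.2)⁻¹) : ℤ) with hB
  set P := Finset.univ.filter (fun p : Fin D × Fin D => p.1 < p.2) with hP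
  have hps : ∑ p ∈ P, (A p.1 + A p.2) = ((D : ℤ) - 1) * ∑ c, A c :=
    GGAux.pair_sum hD A
  have hsplit : nablaInv σ η = (∑ p ∈ P, (A p.1 + A p.2)) - ∑ p ∈ P, B p := by
    rw [nablaInv, ← Finset.sum_sub_distrib]
  have hdeta : (dEta σ η : ℤ) = ∑ c, A c := by
    rw [dEta]
    push_cast [hA]
    rfl
  have hdeg : degInv σ = (∑ p ∈ P, B p) - ((D : ℤ) - 1) * ((n : ℤ) - 1) := by
    rw [degInv, hK]
    push_cast
    rfl
  have hbar : omegaBar σ η = (D : ℤ) - ((D : ℤ) - 1) - (n : ℤ) + ∑ c, A c := by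
    rw [omegaBar, hK1, hK, hdeta]
    push_cast
    ring
  have h_eq : nablaInv σ η = ((D : ℤ) - 1) * omegaBar σ η - degInv σ := by
    rw [hsplit, hps, hbar, hdeg]
    ring
  have h_nonneg : 0 ≤ nablaInv σ η := by
    rw [hsplit, ← Finset.sum_sub_distrib]
    refine Finset.sum_nonneg fun p _ => ?_
    have := GGAux.permLen_triangle (σ p.1) (σ p.2) η
    simp only [hA, hB]
    omega
  refine ⟨h_eq, h_nonneg, by linarith, ?_⟩
  constructor
  · intro h; linarith
  · intro h; linarith
end

section
/- Let n ≥ 1, D ≥ 1 and let σ, τ be D-tuples of permutations of Fin n. Then K_p(σ⌢τ) + d(σ,τ) ≥ K_p(τ), i.e. the quantity C(σ;τ) := K_p(σ⌢τ) − K_p(τ) + d(σ,τ) is a non-negative integer; moreover C(σ;σ) = 0, i.e. K_p(σ⌢σ) = K_p(σ). -/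
open SimpleGraph Equiv

section Graphs

variable {V : Type*}

/-- Transfer reachability along an adjacency-to-reachability map. -/
lemma reach_of_adj_reach {G H : SimpleGraph V}
    (h : ∀ a b : V, G.Adj a b → H.Reachable a b) {u v : V} (huv : G.Reachable u v) :
    H.Reachable u v := by
  obtain ⟨w⟩ := huv
  induction w with
  | nil => exact Reachable.refl _
  | cons hadj _ ih => exact (h _ _ hadj).trans ih

/-- If every `H`-edge is `G`-reachable, then `G` has at most as many components as `H`. -/
lemma card_comps_le [Finite V] {G H : SimpleGraph V}
    (h : ∀ a b : V, H.Adj a b → G.Reachable a b) :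
    Nat.card G.ConnectedComponent ≤ Nat.card H.ConnectedComponent := by
  have : Finite H.ConnectedComponent := Quot.finite _
  refine Nat.card_le_card_of_surjective
    (Quot.lift (fun v => G.connectedComponentMk v)
      (fun a b hr => ConnectedComponent.sound (reach_of_adj_reach h hr))) ?_
  intro c
  obtain ⟨v, rfl⟩ := c.exists_rep
  exact ⟨H.connectedComponentMk v, rfl⟩

lemma card_le_card_add_one {α β : Type*} [Finite α] [Finite β] (Q : α → β) (x0 : α)
    (h : ∀ a a', Q a = Q a' → a = a' ∨ a = x0 ∨ a' = x0) :
    Nat.card α ≤ Nat.card β + 1 := by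
  have hinj : Set.InjOn Q {x0}ᶜ := by
    intro a ha b hb hQ
    rcases h a b hQ with h' | h' | h' <;> simp_all
  calc Nat.card α = (Set.univ : Set α).ncard := (Set.ncard_univ α).symm
    _ = (insert x0 ({x0}ᶜ : Set α)).ncard := by
        congr 1; simp [Set.insert_eq, Set.union_compl_self]
    _ ≤ ({x0}ᶜ : Set α).ncard + 1 := Set.ncard_insert_le _ _
    _ = (Q '' {x0}ᶜ).ncard + 1 := by rw [Set.ncard_image_of_injOn hinj]
    _ ≤ (Set.univ : Set β).ncard + 1 :=
        Nat.add_le_add_right (Set.ncard_le_ncard (Set.subset_univ _) Set.finite_univ) 1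
    _ = Nat.card β + 1 := by rw [Set.ncard_univ]

lemma reach_sup_decomp {B H : SimpleGraph V} {u v : V}
    (hH : ∀ a b : V, H.Adj a b → (a = u ∧ b = v) ∨ (a = v ∧ b = u))
    {a b : V} (hr : (B ⊔ H).Reachable a b) :
    B.Reachable a b ∨ ((B.Reachable a u ∨ B.Reachable a v) ∧
      (B.Reachable b u ∨ B.Reachable b v)) := by
  obtain ⟨w⟩ := hr
  induction w with
  | nil => exact Or.inl (Reachable.refl _)
  | @cons a c b hadj p ih =>
    rcases hadj with hadj | hadj
    · rcases ih with h1 | ⟨h1, h2⟩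
      · exact Or.inl (hadj.reachable.trans h1)
      · exact Or.inr ⟨h1.imp (hadj.reachable.trans) (hadj.reachable.trans), h2⟩
    · rcases hH _ _ hadj with ⟨rfl, rfl⟩ | ⟨rfl, rfl⟩
      · refine Or.inr ⟨Or.inl (Reachable.refl _), ?_⟩
        rcases ih with h1 | ⟨_, h2⟩
        · exact Or.inr h1.symm
        · exact h2
      · refine Or.inr ⟨Or.inr (Reachable.refl _), ?_⟩
        rcases ih with h1 | ⟨_, h2⟩
        · exact Or.inl h1.symm
        · exact h2

/-- Adding a graph whose edges all join `u` and `v` decreases the number of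
connected components by at most one. -/
lemma comps_le_add_edge [Finite V] (B H : SimpleGraph V) (u v : V)
    (hH : ∀ a b : V, H.Adj a b → (a = u ∧ b = v) ∨ (a = v ∧ b = u)) :
    Nat.card B.ConnectedComponent ≤ Nat.card (B ⊔ H).ConnectedComponent + 1 := by
  have : Finite B.ConnectedComponent := Quot.finite _
  have : Finite (B ⊔ H).ConnectedComponent := Quot.finite _
  refine card_le_card_add_one
    (Quot.lift (fun x => (B ⊔ H).connectedComponentMk x)
      (fun a b hr => ConnectedComponent.sound (hr.mono le_sup_left)))
    (B.connectedComponentMk u) ?_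
  intro x y
  obtain ⟨a, rfl⟩ := x.exists_rep
  obtain ⟨b, rfl⟩ := y.exists_rep
  intro hQ
  have hre : (B ⊔ H).Reachable a b := ConnectedComponent.exact hQ
  rcases reach_sup_decomp hH hre with h1 | ⟨h1, h2⟩
  · exact Or.inl (ConnectedComponent.sound h1)
  · rcases h1 with h1 | h1
    · exact Or.inr (Or.inl (ConnectedComponent.sound h1))
    · rcases h2 with h2 | h2
      · exact Or.inr (Or.inr (ConnectedComponent.sound h2))
      · exact Or.inl (ConnectedComponent.sound (h1.trans h2.symm))

end Graphs


open SimpleGraph Equiv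

section PG
variable {V : Type*} {α : Type*}

def permGraph (f : α → V) (g : Equiv.Perm α) : SimpleGraph V :=
  SimpleGraph.fromRel (fun a b => ∃ t, a = f t ∧ b = f (g t))

def listPG (f : α → V) : List (Equiv.Perm α) → SimpleGraph V
  | [] => ⊥
  | g :: l => permGraph f g ⊔ listPG f l

lemma permGraph_reach_step {f : α → V} {g : Equiv.Perm α} {X : SimpleGraph V} (t : α) :
    (permGraph f g ⊔ X).Reachable (f t) (f (g t)) := by
  by_cases h : f t = f (g t)
  · rw [h]
  · exact (Adj.reachable (by exact Or.inl ⟨h, Or.inl ⟨t, rfl, rfl⟩⟩))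

lemma listPG_reach_prod (f : α → V) (G : SimpleGraph V) :
    ∀ (L : List (Equiv.Perm α)) (t : α),
      (G ⊔ listPG f L).Reachable (f t) (f (L.prod t)) := by
  intro L
  induction L with
  | nil => intro t; rw [List.prod_nil]; exact Reachable.refl _
  | cons g L ih =>
    intro t
    have h1 : (G ⊔ listPG f (g :: L)).Reachable (f t) (f (L.prod t)) :=
      (ih t).mono (sup_le_sup_left (by exact le_sup_right) G)
    have h2 : (permGraph f g ⊔ (G ⊔ listPG f L)).Reachable (f (L.prod t)) (f (g (L.prod t))) :=
      permGraph_reach_step (L.prod t)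
    have h2' : (G ⊔ listPG f (g :: L)).Reachable (f (L.prod t)) (f (g (L.prod t))) := by
      refine h2.mono ?_
      show permGraph f g ⊔ (G ⊔ listPG f L) ≤ G ⊔ (permGraph f g ⊔ listPG f L)
      rw [sup_left_comm]
    have : (g :: L).prod t = g (L.prod t) := by
      rw [List.prod_cons, Equiv.Perm.mul_apply]
    rw [this]
    exact h1.trans h2'

lemma listPG_adj (f : α → V) : ∀ (L : List (Equiv.Perm α)) {a b : V},
    (listPG f L).Adj a b → ∃ g ∈ L, (permGraph f g).Adj a b := by
  intro L
  induction L with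
  | nil => intro a b h; exact absurd h (by simp [listPG])
  | cons g L ih =>
    intro a b h
    rcases h with h | h
    · exact ⟨g, List.mem_cons_self, h⟩
    · obtain ⟨g', hg', h'⟩ := ih h
      exact ⟨g', List.mem_cons_of_mem _ hg', h'⟩

lemma permGraph_swap_pairs [DecidableEq α] {x y : α} (hxy : x ≠ y) (f : α → V) :
    ∀ a b, (permGraph f (Equiv.swap x y)).Adj a b →
      (a = f x ∧ b = f y) ∨ (a = f y ∧ b = f x) := by
  rintro a b ⟨hab, h⟩
  rcases h with ⟨t, rfl, rfl⟩ | ⟨t, rfl, rfl⟩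
  · by_cases htx : t = x
    · subst htx; left; simp [Equiv.swap_apply_left]
    · by_cases hty : t = y
      · subst hty; right; simp [Equiv.swap_apply_right]
      · exact absurd (by rw [Equiv.swap_apply_of_ne_of_ne htx hty]) hab
  · by_cases htx : t = x
    · subst htx; right; simp [Equiv.swap_apply_left]
    · by_cases hty : t = y
      · subst hty; left; simp [Equiv.swap_apply_right]
      · exact absurd (by rw [Equiv.swap_apply_of_ne_of_ne htx hty]) hab

end PG


open Equiv Equiv.Perm

section Perm
variable {α : Type*} [Fintype α] [DecidableEq α]

theorem cycle_swaps (c : Equiv.Perm α) (hc : c.IsCycle) :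
    ∃ L : List (Equiv.Perm α), (∀ s ∈ L, s.IsSwap) ∧ L.prod = c ∧
      L.length + 1 = c.support.card := by
  obtain ⟨x, hx, -⟩ := id hc
  by_cases h1 : c (c x) = x
  · have hswap : c = swap x (c x) := hc.eq_swap_of_apply_apply_eq_self hx h1
    refine ⟨[c], ?_, by simp, ?_⟩
    · intro s hs
      rw [List.mem_singleton] at hs
      exact ⟨x, c x, Ne.symm hx, hs.trans hswap⟩
    · rw [hswap, card_support_swap (Ne.symm hx)]; rfl
  · have hcy : (swap x (c x) * c).IsCycle := hc.swap_mul hx h1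
    have hlt : (swap x (c x) * c).support.card < c.support.card :=
      card_support_swap_mul hx
    obtain ⟨L, hsw, hprod, hlen⟩ := cycle_swaps (swap x (c x) * c) hcy
    refine ⟨swap x (c x) :: L, ?_, ?_, ?_⟩
    · intro s hs
      rcases List.mem_cons.mp hs with rfl | hs
      · exact ⟨x, c x, Ne.symm hx, rfl⟩
      · exact hsw s hs
    · rw [List.prod_cons, hprod, ← mul_assoc, swap_mul_self, one_mul]
    · have hsupp : (swap x (c x) * c).support = c.support \ {x} :=
        support_swap_mul_eq c x h1
      have hxmem : x ∈ c.support := mem_support.2 hx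
      have : (c.support \ {x}).card = c.support.card - 1 := by
        rw [Finset.sdiff_singleton_eq_erase, Finset.card_erase_of_mem hxmem]
      rw [hsupp, this] at hlen
      have : 1 ≤ c.support.card := Finset.card_pos.mpr ⟨x, hxmem⟩
      simp only [List.length_cons]
      omega
termination_by c.support.card

theorem cycles_swaps : ∀ l : List (Equiv.Perm α), (∀ c ∈ l, c.IsCycle) →
    ∃ L : List (Equiv.Perm α), (∀ s ∈ L, s.IsSwap) ∧ L.prod = l.prod ∧
      L.length + l.length = (l.map (fun c => c.support.card)).sum := by
  intro l
  induction l with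
  | nil => exact fun _ => ⟨[], by simp, by simp, by simp⟩
  | cons c l ih =>
    intro h
    obtain ⟨L, hsw, hprod, hlen⟩ := ih (fun g hg => h _ (List.mem_cons_of_mem _ hg))
    obtain ⟨Lc, hswc, hprodc, hlenc⟩ := cycle_swaps c (h c (List.mem_cons_self))
    refine ⟨Lc ++ L, ?_, ?_, ?_⟩
    · intro s hs
      rcases List.mem_append.mp hs with hs | hs
      · exact hswc s hs
      · exact hsw s hs
    · rw [List.prod_append, hprodc, hprod, List.prod_cons]
    · simp only [List.length_append, List.length_cons, List.map_cons, List.sum_cons]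
      omega

end Perm

theorem perm_swaps_len {n : ℕ} (g : Equiv.Perm (Fin n)) :
    ∃ L : List (Equiv.Perm (Fin n)), (∀ s ∈ L, s.IsSwap) ∧ L.prod = g ∧
      L.length = permLen g := by
  obtain ⟨l, hp, hc, hd⟩ := g.truncCycleFactors.out
  obtain ⟨L, hsw, hprod, hlen⟩ := cycles_swaps l hc
  have hct : g.cycleType = l.map (Finset.card ∘ Equiv.Perm.support) :=
    Equiv.Perm.cycleType_eq l hp hc hd
  have hctc : Multiset.card g.cycleType = l.length := by rw [hct]; simp
  have hsum : (l.map (fun c => c.support.card)).sum = g.support.card := by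
    have := g.sum_cycleType
    rw [hct] at this
    exact this
  have hfix : (Finset.univ.filter fun x => g x = x).card = n - g.support.card := by
    have h2 : g.support.card + (Finset.univ.filter fun x => g x = x).card = n := by
      have := Finset.card_filter_add_card_filter_not
        (s := (Finset.univ : Finset (Fin n))) (p := fun x => g x ≠ x)
      simp only [Finset.card_univ, Fintype.card_fin] at this
      rw [Equiv.Perm.support]
      simpa using this
    omega
  have hsuppn : g.support.card ≤ n := by
    simpa using Finset.card_le_card (Finset.subset_univ g.support)
  refine ⟨L, hsw, by rw [hprod, hp], ?_⟩
  unfold permLen permOrbits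
  rw [hfix, hctc]
  omega

section Main

open SimpleGraph Equiv

variable {V : Type*} {α : Type*}

private lemma listPG_reach_mem (f : α → V) (X : SimpleGraph V) :
    ∀ (gs : List (Equiv.Perm α)) (g : Equiv.Perm α), g ∈ gs → ∀ t : α,
      (X ⊔ listPG f gs).Reachable (f t) (f (g t)) := by
  intro gs
  induction gs with
  | nil => intro g hg; exact absurd hg List.not_mem_nil
  | cons g' gs ih =>
    intro g hg t
    rcases List.mem_cons.mp hg with rfl | hg
    · have := permGraph_reach_step (f := f) (g := g) (X := X ⊔ listPG f gs) t
      refine this.mono ?_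
      show permGraph f g ⊔ (X ⊔ listPG f gs) ≤ X ⊔ (permGraph f g ⊔ listPG f gs)
      rw [sup_left_comm]
    · exact (ih g hg t).mono (sup_le_sup_left le_sup_right X)

private lemma comps_le_listPG_swaps [Finite V] {n : ℕ} (f : Fin n → V) :
    ∀ (L : List (Equiv.Perm (Fin n))) (G : SimpleGraph V), (∀ s ∈ L, s.IsSwap) →
      Nat.card G.ConnectedComponent ≤
        Nat.card (G ⊔ listPG f L).ConnectedComponent + L.length := by
  intro L
  induction L with
  | nil => intro G _; rw [listPG, sup_bot_eq]; simp
  | cons s L ih =>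
    intro G hsw
    obtain ⟨x, y, hxy, rfl⟩ := hsw s (List.mem_cons_self)
    have h1 := ih G (fun s hs => hsw s (List.mem_cons_of_mem _ hs))
    have h2 := comps_le_add_edge (G ⊔ listPG f L) (permGraph f (Equiv.swap x y)) (f x) (f y)
      (permGraph_swap_pairs hxy f)
    have heq : (G ⊔ listPG f L) ⊔ permGraph f (Equiv.swap x y)
        = G ⊔ listPG f (Equiv.swap x y :: L) := by
      show _ = G ⊔ (permGraph f (Equiv.swap x y) ⊔ listPG f L)
      rw [sup_assoc, sup_comm (listPG f L)]
    rw [heq] at h2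
    simp only [List.length_cons]
    omega

private lemma comps_le_permGraph [Finite V] (G : SimpleGraph V) {n : ℕ}
    (f : Fin n → V) (g : Equiv.Perm (Fin n)) :
    Nat.card G.ConnectedComponent ≤
      Nat.card (G ⊔ permGraph f g).ConnectedComponent + permLen g := by
  obtain ⟨L, hsw, hprod, hlen⟩ := perm_swaps_len g
  have h1 := comps_le_listPG_swaps f L G hsw
  have h2 : Nat.card (G ⊔ listPG f L).ConnectedComponent ≤
      Nat.card (G ⊔ permGraph f g).ConnectedComponent := by
    apply card_comps_le
    intro a b hadj
    rcases hadj with hadj | hadj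
    · exact hadj.reachable.mono le_sup_left
    · obtain ⟨hab, h⟩ := hadj
      rcases h with ⟨t, rfl, rfl⟩ | ⟨t, rfl, rfl⟩
      · rw [← hprod]; exact listPG_reach_prod f G L t
      · rw [← hprod]; exact (listPG_reach_prod f G L t).symm
  omega

private lemma comps_le_listPG_perms [Finite V] {n : ℕ} (f : Fin n → V) :
    ∀ (gs : List (Equiv.Perm (Fin n))) (G : SimpleGraph V),
      Nat.card G.ConnectedComponent ≤
        Nat.card (G ⊔ listPG f gs).ConnectedComponent + (gs.map permLen).sum := by
  intro gs
  induction gs with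
  | nil => intro G; rw [listPG, sup_bot_eq]; simp
  | cons g gs ih =>
    intro G
    have h1 := ih G
    have h2 := comps_le_permGraph (G ⊔ listPG f gs) f g
    have heq : (G ⊔ listPG f gs) ⊔ permGraph f g = G ⊔ listPG f (g :: gs) := by
      show _ = G ⊔ (permGraph f g ⊔ listPG f gs)
      rw [sup_assoc, sup_comm (listPG f gs)]
    rw [heq] at h2
    simp only [List.map_cons, List.sum_cons]
    omega

private lemma Kp_key {n D : ℕ} (σ τ : Fin D → Equiv.Perm (Fin n)) :
    Kp τ ≤ Kp (Fin.append σ τ : Fin (D + D) → Equiv.Perm (Fin n)) + dTuple σ τ := by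
  classical
  set gs : List (Equiv.Perm (Fin n)) :=
    (List.finRange D).map (fun c => σ c * (τ c)⁻¹) with hgs
  have hsum : (gs.map permLen).sum = dTuple σ τ := by
    rw [hgs, List.map_map, dTuple, Fin.sum_univ_def]
    rfl
  have h1 := comps_le_listPG_perms (Sum.inr : Fin n → (Fin n) ⊕ (Fin n)) gs (pairGraph τ)
  have h2 : Nat.card (pairGraph τ ⊔ listPG Sum.inr gs).ConnectedComponent ≤
      Nat.card (pairGraph (Fin.append σ τ : Fin (D + D) → Equiv.Perm (Fin n))).ConnectedComponent := by
    apply card_comps_le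
    have main : ∀ s t : Fin n, (∃ c : Fin (D + D), Fin.append σ τ c s = t) →
        (pairGraph τ ⊔ listPG Sum.inr gs).Reachable (Sum.inl s) (Sum.inr t) := by
      rintro s t ⟨c, hc⟩
      revert hc
      refine Fin.addCases (fun c' hc => ?_) (fun c' hc => ?_) c
      · rw [Fin.append_left] at hc
        subst hc
        have e1 : (pairGraph τ).Adj (Sum.inl s) (Sum.inr (τ c' s)) :=
          ⟨by simp, Or.inl ⟨s, τ c' s, rfl, rfl, c', rfl⟩⟩
        have hmem : (σ c' * (τ c')⁻¹) ∈ gs :=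
          List.mem_map.2 ⟨c', List.mem_finRange c', rfl⟩
        have r2 := listPG_reach_mem Sum.inr (pairGraph τ) gs (σ c' * (τ c')⁻¹) hmem (τ c' s)
        have happ : (σ c' * (τ c')⁻¹) (τ c' s) = σ c' s := by
          simp [Equiv.Perm.mul_apply]
        rw [happ] at r2
        exact (e1.reachable.mono le_sup_left).trans r2
      · rw [Fin.append_right] at hc
        have e1 : (pairGraph τ).Adj (Sum.inl s) (Sum.inr t) :=
          ⟨by simp, Or.inl ⟨s, t, rfl, rfl, c', hc⟩⟩
        exact e1.reachable.mono le_sup_left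
    intro a b hadj
    obtain ⟨hab, h⟩ := hadj
    rcases h with ⟨s, t, rfl, rfl, hc⟩ | ⟨s, t, rfl, rfl, hc⟩
    · exact main s t hc
    · exact (main s t hc).symm
  unfold Kp
  omega

/-- `C(σ;τ) := K_p(σ⌢τ) − K_p(τ) + d(σ,τ)` is a non-negative integer, and
`C(σ;σ) = 0`, i.e. `K_p(σ⌢σ) = K_p(σ)`. -/
theorem C_nonneg_and_C_self_eq_zero
    (n D : ℕ) (hn : 1 ≤ n) (hD : 1 ≤ D)
    (σ τ : Fin D → Equiv.Perm (Fin n)) :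
    (0 ≤ (Kp (Fin.append σ τ : Fin (D + D) → Equiv.Perm (Fin n)) : ℤ) -
        (Kp τ : ℤ) + (dTuple σ τ : ℤ)) ∧
      ((Kp (Fin.append σ σ : Fin (D + D) → Equiv.Perm (Fin n)) : ℤ) -
        (Kp σ : ℤ) + (dTuple σ σ : ℤ) = 0) ∧
      Kp (Fin.append σ σ : Fin (D + D) → Equiv.Perm (Fin n)) = Kp σ := by
  have hiff : ∀ s t : Fin n,
      (∃ c : Fin (D + D), Fin.append σ σ c s = t) ↔ (∃ c : Fin D, σ c s = t) := by
    intro s t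
    constructor
    · rintro ⟨c, hc⟩
      revert hc
      refine Fin.addCases (fun c' hc => ?_) (fun c' hc => ?_) c
      · rw [Fin.append_left] at hc; exact ⟨c', hc⟩
      · rw [Fin.append_right] at hc; exact ⟨c', hc⟩
    · rintro ⟨c, hc⟩
      exact ⟨Fin.castAdd D c, by rwa [Fin.append_left]⟩
  have hpg : pairGraph (Fin.append σ σ : Fin (D + D) → Equiv.Perm (Fin n)) = pairGraph σ := by
    unfold pairGraph
    congr 1
    funext a b
    simp only [hiff]
  have hKpeq : Kp (Fin.append σ σ : Fin (D + D) → Equiv.Perm (Fin n)) = Kp σ := by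
    unfold Kp; rw [hpg]
  have hd0 : dTuple σ σ = 0 := by
    unfold dTuple
    refine Finset.sum_eq_zero fun c _ => ?_
    rw [mul_inv_cancel]
    unfold permLen permOrbits
    simp [Equiv.Perm.cycleType_one]
  have hkey := Kp_key σ τ
  refine ⟨by omega, by omega, hKpeq⟩

end Main
end

section
/- Let n ≥ 1, D ≥ 1, let σ, τ be D-tuples of permutations of Fin n and let η be a permutation of Fin n, with K_p(σ) = 1 and K_p(τ⌢η) = K_p(τ). Then, as integers, (K_p(σ⌢τ) − K_p(τ) + d(σ,τ)) + ω̄(τ;η) − ω̄(σ;η) = d(σ,τ) + d(τ,η) − d(σ,η). In particular (K_p(σ⌢τ) − K_p(τ) + d(σ,τ)) + ω̄(τ;η) ≥ ω̄(σ;η), with equality if and only if τ_c η⁻¹ ⪯ σ_c η⁻¹ for every c ∈ {1,…,D}. -/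
section Orbits

open Equiv Equiv.Perm

variable {n : ℕ}

private theorem sameCycle_fixed {π : Equiv.Perm (Fin n)} {x y : Fin n}
    (hx : π x = x) (h : π.SameCycle x y) : y = x := by
  obtain ⟨k, hk⟩ := h
  rw [← hk]
  exact (Function.IsFixedPt.perm_zpow hx k :)

theorem permOrbits_eq_card (π : Equiv.Perm (Fin n)) :
    permOrbits π = Nat.card (Quot π.SameCycle) := by
  classical
  have hfin : Finite (Quot π.SameCycle) :=
    Finite.of_surjective (Quot.mk π.SameCycle) Quot.mk_surjective
  let T := {x : Fin n // π x = x} ⊕ {c // c ∈ π.cycleFactorsFinset}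
  let f : Fin n → T := fun x =>
    if hx : π x = x then Sum.inl ⟨x, hx⟩
    else Sum.inr ⟨π.cycleOf x,
      (Equiv.Perm.cycleOf_mem_cycleFactorsFinset_iff).mpr (Equiv.Perm.mem_support.mpr hx)⟩
  have hresp : ∀ x y, π.SameCycle x y → f x = f y := by
    intro x y hxy
    by_cases hx : π x = x
    · rw [sameCycle_fixed hx hxy]
    · by_cases hy : π y = y
      · rw [sameCycle_fixed hy hxy.symm]
      · simp only [f, dif_neg hx, dif_neg hy]
        exact congrArg _ (Subtype.ext hxy.cycleOf_eq)
  let F : Quot π.SameCycle → T := Quot.lift f hresp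
  have hbij : Function.Bijective F := by
    constructor
    · intro a b
      refine Quot.induction_on₂ a b ?_
      intro x y hfxy
      apply Quot.sound
      change f x = f y at hfxy
      by_cases hx : π x = x <;> by_cases hy : π y = y
      · rw [show f x = Sum.inl ⟨x, hx⟩ from dif_pos hx,
          show f y = Sum.inl ⟨y, hy⟩ from dif_pos hy] at hfxy
        have hxy : x = y := congrArg Subtype.val (Sum.inl_injective hfxy)
        exact ⟨0, by simp [hxy]⟩
      · rw [show f x = Sum.inl ⟨x, hx⟩ from dif_pos hx,
          show f y = _ from dif_neg hy] at hfxy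
        cases hfxy
      · rw [show f x = _ from dif_neg hx,
          show f y = Sum.inl ⟨y, hy⟩ from dif_pos hy] at hfxy
        cases hfxy
      · rw [show f x = _ from dif_neg hx, show f y = _ from dif_neg hy] at hfxy
        have hfxy : π.cycleOf x = π.cycleOf y :=
          congrArg Subtype.val (Sum.inr_injective hfxy)
        have hy' : y ∈ (π.cycleOf y).support :=
          Equiv.Perm.mem_support_cycleOf_iff.mpr
            ⟨⟨0, by simp⟩, Equiv.Perm.mem_support.mpr hy⟩
        rw [← hfxy] at hy'
        exact (Equiv.Perm.mem_support_cycleOf_iff.mp hy').1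
    · intro t
      cases t with
      | inl x => exact ⟨Quot.mk _ x.1, by simp only [F, f, dif_pos x.2]⟩
      | inr c =>
          obtain ⟨c, hc⟩ := c
          have hcyc : c.IsCycle := (mem_cycleFactorsFinset_iff.mp hc).1
          obtain ⟨x, hx⟩ := hcyc.nonempty_support
          have hπx : π x ≠ x := by
            have h2 := (mem_cycleFactorsFinset_iff.mp hc).2 x hx
            rw [← h2]
            exact Equiv.Perm.mem_support.mp hx
          refine ⟨Quot.mk _ x, ?_⟩
          simp only [F, f, dif_neg hπx]
          exact congrArg _ (Subtype.ext (cycle_is_cycleOf hx hc).symm)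
  have hcard := Nat.card_eq_of_bijective F hbij
  have h1 : Nat.card T = Nat.card {x : Fin n // π x = x} +
      Nat.card {c // c ∈ π.cycleFactorsFinset} := Nat.card_sum
  have h2 : Nat.card {x : Fin n // π x = x} =
      (Finset.univ.filter fun x => π x = x).card := by
    rw [Nat.card_eq_fintype_card, Fintype.card_subtype]
  have h3 : Nat.card {c // c ∈ π.cycleFactorsFinset} = Multiset.card π.cycleType := by
    rw [Nat.card_eq_fintype_card, cycleType_def, Multiset.card_map]
    exact Fintype.card_coe _
  rw [permOrbits, hcard, h1, h2, h3]
  omega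

end Orbits

section LinAlg

open Equiv Equiv.Perm Module LinearMap

variable {n : ℕ}

/-- The linear map `v ↦ v ∘ π - v` on `Fin n → ℚ`. -/
noncomputable def permMap (π : Equiv.Perm (Fin n)) : (Fin n → ℚ) →ₗ[ℚ] (Fin n → ℚ) :=
  LinearMap.funLeft ℚ ℚ ⇑π - LinearMap.id

theorem mem_ker_permMap {π : Equiv.Perm (Fin n)} {v : Fin n → ℚ} :
    v ∈ LinearMap.ker (permMap π) ↔ ∀ x, v (π x) = v x := by
  rw [LinearMap.mem_ker]
  constructor
  · intro h x
    have := congrFun h x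
    simpa [permMap, sub_eq_zero, LinearMap.funLeft_apply] using this
  · intro h
    funext x
    simp [permMap, sub_eq_zero, LinearMap.funLeft_apply, h x]

private theorem ker_const_pow {π : Equiv.Perm (Fin n)} {v : Fin n → ℚ}
    (hv : ∀ x, v (π x) = v x) : ∀ (k : ℕ) (x : Fin n), v ((π ^ k) x) = v x := by
  intro k
  induction k with
  | zero => simp
  | succ k ih =>
    intro x
    rw [pow_succ', Equiv.Perm.mul_apply, hv ((π ^ k) x)]
    exact ih x

theorem permOrbits_eq_finrank (π : Equiv.Perm (Fin n)) :
    permOrbits π = finrank ℚ (LinearMap.ker (permMap π)) := by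
  classical
  rw [permOrbits_eq_card]
  have hfin : Finite (Quot π.SameCycle) :=
    Finite.of_surjective (Quot.mk π.SameCycle) Quot.mk_surjective
  letI : Fintype (Quot π.SameCycle) := Fintype.ofFinite _
  -- linear equivalence between the kernel and functions on the quotient
  have hconst : ∀ (v : LinearMap.ker (permMap π)) (x y : Fin n),
      π.SameCycle x y → (v : Fin n → ℚ) x = (v : Fin n → ℚ) y := by
    intro v x y hxy
    obtain ⟨i, _, hi⟩ := hxy.exists_pow_eq'
    rw [← hi]
    exact (ker_const_pow (mem_ker_permMap.mp v.2) i x).symm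
  let F : LinearMap.ker (permMap π) →ₗ[ℚ] (Quot π.SameCycle → ℚ) :=
    { toFun := fun v => Quot.lift (fun x => (v : Fin n → ℚ) x)
        (fun x y h => hconst v x y h)
      map_add' := by
        intro v w
        funext q
        refine Quot.inductionOn q ?_
        intro x
        rfl
      map_smul' := by
        intro c v
        funext q
        refine Quot.inductionOn q ?_
        intro x
        rfl }
  let G : (Quot π.SameCycle → ℚ) →ₗ[ℚ] LinearMap.ker (permMap π) :=
    { toFun := fun w => ⟨fun x => w (Quot.mk _ x), mem_ker_permMap.mpr (by
        intro x
        have : Quot.mk π.SameCycle (π x) = Quot.mk π.SameCycle x :=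
          Quot.sound ⟨-1, by simp⟩
        rw [this])⟩
      map_add' := by intro v w; rfl
      map_smul' := by intro c v; rfl }
  have hFG : ∀ w, F (G w) = w := by
    intro w
    funext q
    refine Quot.inductionOn q ?_
    intro x
    rfl
  have hGF : ∀ v, G (F v) = v := by
    intro v
    apply Subtype.ext
    rfl
  let E : LinearMap.ker (permMap π) ≃ₗ[ℚ] (Quot π.SameCycle → ℚ) :=
    LinearEquiv.ofLinear F G (LinearMap.ext fun w => hFG w)
      (LinearMap.ext fun v => hGF v)
  rw [E.finrank_eq, Module.finrank_fintype_fun_eq_card, Nat.card_eq_fintype_card]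

theorem permOrbits_le (π : Equiv.Perm (Fin n)) : permOrbits π ≤ n := by
  rw [permOrbits_eq_finrank]
  have := Submodule.finrank_le (LinearMap.ker (permMap π))
  simpa [Module.finrank_fintype_fun_eq_card] using this

theorem permLen_eq_finrank (π : Equiv.Perm (Fin n)) :
    permLen π = finrank ℚ (LinearMap.range (permMap π)) := by
  have h := LinearMap.finrank_range_add_finrank_ker (permMap π)
  rw [Module.finrank_fintype_fun_eq_card, Fintype.card_fin] at h
  have h2 := permOrbits_eq_finrank π
  have h3 := permOrbits_le π
  rw [permLen]
  omega

theorem permLen_mul_le (a b : Equiv.Perm (Fin n)) :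
    permLen (a * b) ≤ permLen a + permLen b := by
  rw [permLen_eq_finrank, permLen_eq_finrank, permLen_eq_finrank]
  have hdecomp : permMap (a * b) =
      (LinearMap.funLeft ℚ ℚ ⇑b).comp (permMap a) + permMap b := by
    refine LinearMap.ext fun v => funext fun x => ?_
    simp only [permMap, LinearMap.sub_apply, LinearMap.add_apply, LinearMap.comp_apply,
      LinearMap.funLeft_apply, LinearMap.id_apply, Function.comp_apply, Equiv.Perm.mul_apply,
      Pi.sub_apply, Pi.add_apply, Pi.neg_apply, map_sub]
    ring
  set X := (LinearMap.funLeft ℚ ℚ ⇑b).comp (permMap a) with hX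
  set Y := permMap b with hY
  rw [hdecomp]
  have h1 : LinearMap.range (X + Y) ≤ LinearMap.range X ⊔ LinearMap.range Y := by
    rintro x ⟨v, rfl⟩
    exact Submodule.mem_sup.mpr ⟨X v, ⟨v, rfl⟩, Y v, ⟨v, rfl⟩, rfl⟩
  calc finrank ℚ (LinearMap.range (X + Y)) ≤
      finrank ℚ ↥(LinearMap.range X ⊔ LinearMap.range Y) := Submodule.finrank_mono h1
    _ ≤ finrank ℚ (LinearMap.range X) + finrank ℚ (LinearMap.range Y) := by
      have := Submodule.finrank_sup_add_finrank_inf_eq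
        (LinearMap.range X) (LinearMap.range Y)
      omega
    _ ≤ finrank ℚ (LinearMap.range (permMap a)) + finrank ℚ (LinearMap.range Y) := by
      have hrc : LinearMap.range X =
          (LinearMap.range (permMap a)).map (LinearMap.funLeft ℚ ℚ ⇑b) :=
        LinearMap.range_comp _ _
      rw [hrc]
      exact Nat.add_le_add_right (Submodule.finrank_map_le _ _) _

theorem permLen_inv (π : Equiv.Perm (Fin n)) : permLen π⁻¹ = permLen π := by
  have : permOrbits π⁻¹ = permOrbits π := by
    rw [permOrbits_eq_card, permOrbits_eq_card]
    have : (π⁻¹).SameCycle = π.SameCycle := by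
      funext x y
      exact propext (Equiv.Perm.sameCycle_inv)
    rw [this]
  rw [permLen, permLen, this]

end LinAlg

/-- `α ⪯ β`: the permutation `α` lies on a geodesic from the identity to `β`,
i.e. `|α| + |α β⁻¹| = |β|`. -/
def geodesicLe {n : ℕ} (α β : Equiv.Perm (Fin n)) : Prop :=
  permLen α + permLen (α * β⁻¹) = permLen β

section Graphs

theorem card_components_eq_one_mono {V : Type*} [Nonempty V] {G H : SimpleGraph V}
    (hGH : G ≤ H) (hG : Nat.card G.ConnectedComponent = 1) :
    Nat.card H.ConnectedComponent = 1 := by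
  rw [Nat.card_eq_one_iff_unique] at hG ⊢
  refine ⟨⟨?_⟩, ⟨H.connectedComponentMk Classical.ofNonempty⟩⟩
  intro a b
  refine SimpleGraph.ConnectedComponent.ind₂ (fun u v => ?_) a b
  have hr : G.Reachable u v :=
    (SimpleGraph.ConnectedComponent.eq).mp
      (@Subsingleton.elim _ hG.1 (G.connectedComponentMk u) (G.connectedComponentMk v))
  exact SimpleGraph.ConnectedComponent.sound (hr.mono hGH)

theorem pairGraph_mono {n D D' : ℕ} (σ : Fin D → Equiv.Perm (Fin n))
    (σ' : Fin D' → Equiv.Perm (Fin n))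
    (h : ∀ c : Fin D, ∃ c' : Fin D', σ' c' = σ c) :
    pairGraph σ ≤ pairGraph σ' := by
  intro a b hab
  rw [pairGraph, SimpleGraph.fromRel_adj] at hab ⊢
  obtain ⟨hne, hr⟩ := hab
  refine ⟨hne, ?_⟩
  rcases hr with ⟨s, t, ha, hb, c, hc⟩ | ⟨s, t, ha, hb, c, hc⟩
  · obtain ⟨c', hc'⟩ := h c
    exact Or.inl ⟨s, t, ha, hb, c', by rw [hc']; exact hc⟩
  · obtain ⟨c', hc'⟩ := h c
    exact Or.inr ⟨s, t, ha, hb, c', by rw [hc']; exact hc⟩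

end Graphs

/-- For `K_p(σ) = 1` and `K_p(τ⌢η) = K_p(τ)`:
`(K_p(σ⌢τ) − K_p(τ) + d(σ,τ)) + ω̄(τ;η) − ω̄(σ;η) = d(σ,τ) + d(τ,η) − d(σ,η)`;
in particular `(K_p(σ⌢τ) − K_p(τ) + d(σ,τ)) + ω̄(τ;η) ≥ ω̄(σ;η)`, with
equality iff `τ_c η⁻¹ ⪯ σ_c η⁻¹` for every `c`. -/
theorem triangular_identity_in_degrees
    (n D : ℕ) (hn : 1 ≤ n) (hD : 1 ≤ D)
    (σ τ : Fin D → Equiv.Perm (Fin n)) (η : Equiv.Perm (Fin n))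
    (hK : Kp σ = 1)
    (hτ : Kp (Fin.snoc τ η : Fin (D + 1) → Equiv.Perm (Fin n)) = Kp τ) :
    (((Kp (Fin.append σ τ : Fin (D + D) → Equiv.Perm (Fin n)) : ℤ) -
          (Kp τ : ℤ) + (dTuple σ τ : ℤ)) + omegaBar τ η - omegaBar σ η =
        (dTuple σ τ : ℤ) + (dEta τ η : ℤ) - (dEta σ η : ℤ)) ∧
      (omegaBar σ η ≤
        ((Kp (Fin.append σ τ : Fin (D + D) → Equiv.Perm (Fin n)) : ℤ) -
          (Kp τ : ℤ) + (dTuple σ τ : ℤ)) + omegaBar τ η) ∧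
      ((((Kp (Fin.append σ τ : Fin (D + D) → Equiv.Perm (Fin n)) : ℤ) -
            (Kp τ : ℤ) + (dTuple σ τ : ℤ)) + omegaBar τ η = omegaBar σ η) ↔
        ∀ c, geodesicLe (τ c * η⁻¹) (σ c * η⁻¹)) := by
  have hNE : Nonempty ((Fin n) ⊕ (Fin n)) := ⟨Sum.inl ⟨0, hn⟩⟩
  have h1 : Kp (Fin.append σ τ : Fin (D + D) → Equiv.Perm (Fin n)) = 1 :=
    card_components_eq_one_mono (pairGraph_mono σ _ fun c =>
      ⟨Fin.castAdd D c, Fin.append_left σ τ c⟩) hK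
  have h2 : Kp (Fin.snoc σ η : Fin (D + 1) → Equiv.Perm (Fin n)) = 1 :=
    card_components_eq_one_mono (pairGraph_mono σ _ fun c =>
      ⟨Fin.castSucc c, by simp⟩) hK
  have tri : ∀ c : Fin D,
      permLen (σ c * η⁻¹) ≤ permLen (σ c * (τ c)⁻¹) + permLen (τ c * η⁻¹) := by
    intro c
    have h := permLen_mul_le (σ c * (τ c)⁻¹) (τ c * η⁻¹)
    rwa [show σ c * (τ c)⁻¹ * (τ c * η⁻¹) = σ c * η⁻¹ by group] at h
  have hsum : dEta σ η ≤ dTuple σ τ + dEta τ η := by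
    unfold dEta dTuple
    rw [← Finset.sum_add_distrib]
    exact Finset.sum_le_sum fun c _ => tri c
  have hωσ : omegaBar σ η = 1 - (n : ℤ) + (dEta σ η : ℤ) := by
    unfold omegaBar
    rw [h2, hK]
    push_cast
    ring
  have hωτ : omegaBar τ η = (Kp τ : ℤ) - (n : ℤ) + (dEta τ η : ℤ) := by
    unfold omegaBar
    rw [hτ]
    ring
  have hgiff : ∀ c : Fin D, geodesicLe (τ c * η⁻¹) (σ c * η⁻¹) ↔
      permLen (σ c * (τ c)⁻¹) + permLen (τ c * η⁻¹) = permLen (σ c * η⁻¹) := by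
    intro c
    unfold geodesicLe
    rw [show τ c * η⁻¹ * (σ c * η⁻¹)⁻¹ = (σ c * (τ c)⁻¹)⁻¹ by group, permLen_inv]
    omega
  refine ⟨by rw [h1, hωσ, hωτ]; push_cast; ring, ?_, ?_⟩
  · rw [h1, hωσ, hωτ]
    have hc : (dEta σ η : ℤ) ≤ (dTuple σ τ : ℤ) + (dEta τ η : ℤ) := by exact_mod_cast hsum
    push_cast
    linarith
  · rw [h1, hωσ, hωτ]
    constructor
    · intro hEq
      have hz : dTuple σ τ + dEta τ η = dEta σ η := by
        have hz' : (dTuple σ τ : ℤ) + (dEta τ η : ℤ) = (dEta σ η : ℤ) := by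
          push_cast at hEq ⊢
          linarith
        exact_mod_cast hz'
      unfold dTuple dEta at hz
      rw [← Finset.sum_add_distrib] at hz
      have hterm := (Finset.sum_eq_sum_iff_of_le (fun c _ => tri c)).mp hz.symm
      intro c
      rw [hgiff c]
      have := hterm c (Finset.mem_univ c)
      omega
    · intro hgeo
      have hz : dTuple σ τ + dEta τ η = dEta σ η := by
        unfold dTuple dEta
        rw [← Finset.sum_add_distrib]
        exact Finset.sum_congr rfl fun c _ => ((hgiff c).mp (hgeo c))
      have hz' : (dTuple σ τ : ℤ) + (dEta τ η : ℤ) = (dEta σ η : ℤ) := by exact_mod_cast hz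
      push_cast at hz' ⊢
      linarith
end
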